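/- arXiv:1107.1607 — 5 statements merged into one kernel-verified Lean document; each statement's English description precedes it below -/
import Mathlib

section
/- Let D be a nonempty subset of ℝⁿ and let u ∈ ℂⁿ be such that x ↦ e^{⟨u,x⟩} is bounded on D, i.e. sup_{x∈D} Re⟨u,x⟩ < ∞. Suppose that for every x ∈ D there is a Borel measure μ_x on ℝⁿ with total mass at most 1 that is concentrated on D, and that there exist a constant Φ ∈ ℂ and a vector ψ ∈ ℂⁿ such that ∫ e^{⟨u,ξ⟩} μ_x(dξ) = Φ · e^{⟨ψ,x⟩} for every x ∈ D. If Φ ≠ 0, then sup_{x∈D} Re⟨ψ,x⟩ < ∞, i.e. x ↦ e^{⟨ψ,x⟩} is bounded on D. -/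
open MeasureTheory Complex

/-- The bilinear (no conjugation) pairing `⟨u,x⟩ = ∑ i, u i * x i` between `ℂⁿ` and `ℝⁿ`. -/
noncomputable def biPair {n : ℕ} (u : Fin n → ℂ) (x : Fin n → ℝ) : ℂ :=
  ∑ i, u i * (x i : ℂ)

/-- If `x ↦ e^{⟨u,x⟩}` is bounded on a nonempty set `D`, each `μ x` is a sub-probability
measure concentrated on `D`, and `∫ e^{⟨u,ξ⟩} μ_x(dξ) = Φ e^{⟨ψ,x⟩}` on `D` with `Φ ≠ 0`,
then `x ↦ e^{⟨ψ,x⟩}` is bounded on `D`. -/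
theorem psi_mem_U_of_Phi_ne_zero {n : ℕ} (D : Set (Fin n → ℝ)) (hD : D.Nonempty)
    (u : Fin n → ℂ) (hu : ∃ C : ℝ, ∀ x ∈ D, (biPair u x).re ≤ C)
    (μ : (Fin n → ℝ) → Measure (Fin n → ℝ))
    (hμ1 : ∀ x ∈ D, μ x Set.univ ≤ 1)
    (hμD : ∀ x ∈ D, μ x Dᶜ = 0)
    (Φ : ℂ) (ψ : Fin n → ℂ)
    (haff : ∀ x ∈ D, ∫ ξ, Complex.exp (biPair u ξ) ∂(μ x) = Φ * Complex.exp (biPair ψ x))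
    (hΦ : Φ ≠ 0) :
    ∃ C : ℝ, ∀ x ∈ D, (biPair ψ x).re ≤ C := by
  obtain ⟨C, hC⟩ := hu
  have hΦpos : 0 < ‖Φ‖ := norm_pos_iff.mpr hΦ
  refine ⟨C - Real.log ‖Φ‖, fun x hx => ?_⟩
  have hfin : IsFiniteMeasure (μ x) :=
    ⟨lt_of_le_of_lt (hμ1 x hx) ENNReal.one_lt_top⟩
  -- a.e. bound on the integrand
  have hae : ∀ᵐ ξ ∂(μ x), ‖Complex.exp (biPair u ξ)‖ ≤ Real.exp C := by
    have hD' : ∀ᵐ ξ ∂(μ x), ξ ∈ D := by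
      rw [MeasureTheory.ae_iff]
      exact hμD x hx
    filter_upwards [hD'] with ξ hξ
    rw [Complex.norm_exp]
    exact Real.exp_le_exp.mpr (hC ξ hξ)
  have hnorm : ‖∫ ξ, Complex.exp (biPair u ξ) ∂(μ x)‖ ≤ Real.exp C * ((μ x) Set.univ).toReal :=
    norm_integral_le_of_norm_le_const hae
  have hmass : ((μ x) Set.univ).toReal ≤ 1 := by
    have := ENNReal.toReal_mono ENNReal.one_ne_top (hμ1 x hx)
    simpa using this
  have hle : ‖Φ‖ * Real.exp ((biPair ψ x).re) ≤ Real.exp C := by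
    have h1 : ‖Φ * Complex.exp (biPair ψ x)‖ ≤ Real.exp C := by
      rw [← haff x hx]
      calc ‖∫ ξ, Complex.exp (biPair u ξ) ∂(μ x)‖
          ≤ Real.exp C * ((μ x) Set.univ).toReal := hnorm
        _ ≤ Real.exp C * 1 := by
            exact mul_le_mul_of_nonneg_left hmass (Real.exp_nonneg C)
        _ = Real.exp C := mul_one _
    simpa [norm_mul, Complex.norm_exp] using h1
  -- conclude
  have hexp : Real.exp ((biPair ψ x).re) ≤ Real.exp (C - Real.log ‖Φ‖) := by
    rw [Real.exp_sub, Real.exp_log hΦpos]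
    rw [le_div_iff₀ hΦpos]
    linarith [hle, mul_comm ‖Φ‖ (Real.exp ((biPair ψ x).re))]
  exact Real.exp_le_exp.mp hexp
end

section
/- Let D ⊆ ℝⁿ be nonempty and U := {u ∈ ℂⁿ : sup_{x∈D} Re⟨u,x⟩ < ∞}. Let (p_t)_{t≥0} be a family of Borel kernels on ℝⁿ such that for every t ≥ 0 and x ∈ D the measure p_t(x,·) has total mass at most 1 and is concentrated on D, and the Chapman–Kolmogorov equation holds: p_{t+s}(x,Γ) = ∫ p_t(ξ,Γ) p_s(x,dξ) for all s,t ≥ 0, x ∈ D and Borel sets Γ ⊆ ℝⁿ. Let Φ : ℝ≥0 × ℂⁿ → ℂ and ψ : ℝ≥0 × ℂⁿ → ℂⁿ satisfy the affine identity ∫ e^{⟨u,ξ⟩} p_t(x,dξ) = Φ(t,u) e^{⟨ψ(t,u),x⟩} for all t ≥ 0, x ∈ D and u ∈ U. Fix u ∈ U and s,t ≥ 0 and suppose Φ(t+s,u) ≠ 0. Then Φ(t,u) ≠ 0, ψ(t,u) ∈ U, Φ(s,ψ(t,u)) ≠ 0, and for every x ∈ D one has the semiflow identity Φ(t+s,u)·e^{⟨ψ(t+s,u),x⟩}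 = Φ(t,u)·Φ(s,ψ(t,u))·e^{⟨ψ(s,ψ(t,u)),x⟩}. -/
open MeasureTheory Complex
open scoped NNReal
open scoped ENNReal

/-- The set `U` of admissible exponents: those `u ∈ ℂⁿ` for which `x ↦ e^{⟨u,x⟩}` is
bounded on `D`, i.e. `sup_{x ∈ D} Re⟨u,x⟩ < ∞`. -/
def Uset {n : ℕ} (D : Set (Fin n → ℝ)) : Set (Fin n → ℂ) :=
  {u | ∃ C : ℝ, ∀ x ∈ D, (biPair u x).re ≤ C}


section auxCK
variable {X : Type*} [MeasurableSpace X]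

lemma lintegral_CK_le (ν μ : Measure X) (κ : X → Measure X)
    (hCK : ∀ Γ : Set X, MeasurableSet Γ → μ Γ = ∫⁻ ξ, κ ξ Γ ∂ν)
    (h : X → ℝ≥0∞) (hh : Measurable h) :
    ∫⁻ ζ, h ζ ∂μ ≤ ∫⁻ ξ, ∫⁻ ζ, h ζ ∂(κ ξ) ∂ν := by
  have hsimple : ∀ φ : SimpleFunc X ℝ≥0∞,
      ∫⁻ ζ, φ ζ ∂μ ≤ ∫⁻ ξ, ∫⁻ ζ, φ ζ ∂(κ ξ) ∂ν := by
    intro φ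
    refine SimpleFunc.induction (motive := fun φ : SimpleFunc X ℝ≥0∞ =>
      ∫⁻ ζ, φ ζ ∂μ ≤ ∫⁻ ξ, ∫⁻ ζ, φ ζ ∂(κ ξ) ∂ν) ?_ ?_ φ
    · intro c s hs
      have hcoe : ∀ (m : Measure X),
          ∫⁻ ζ, (SimpleFunc.piecewise s hs (SimpleFunc.const X c) (SimpleFunc.const X 0)) ζ ∂m
            = c * m s := by
        intro m
        simp only [SimpleFunc.coe_piecewise, SimpleFunc.coe_const, Set.piecewise_eq_indicator]
        exact lintegral_indicator_const hs c
      calc ∫⁻ ζ, (SimpleFunc.piecewise s hs (SimpleFunc.const X c) (SimpleFunc.const X 0)) ζ ∂μ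
          = c * μ s := hcoe μ
        _ = c * ∫⁻ ξ, κ ξ s ∂ν := by rw [hCK s hs]
        _ ≤ ∫⁻ ξ, c * κ ξ s ∂ν := lintegral_const_mul_le c _
        _ = ∫⁻ ξ, ∫⁻ ζ, (SimpleFunc.piecewise s hs (SimpleFunc.const X c) (SimpleFunc.const X 0)) ζ ∂(κ ξ) ∂ν :=
            lintegral_congr fun ξ => (hcoe (κ ξ)).symm
    · intro f g _ hf hg
      calc ∫⁻ ζ, (f + g) ζ ∂μ = ∫⁻ ζ, f ζ + g ζ ∂μ := by simp [SimpleFunc.coe_add]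
        _ = ∫⁻ ζ, f ζ ∂μ + ∫⁻ ζ, g ζ ∂μ := lintegral_add_left f.measurable _
        _ ≤ (∫⁻ ξ, ∫⁻ ζ, f ζ ∂(κ ξ) ∂ν) + ∫⁻ ξ, ∫⁻ ζ, g ζ ∂(κ ξ) ∂ν := add_le_add hf hg
        _ ≤ ∫⁻ ξ, (∫⁻ ζ, f ζ ∂(κ ξ)) + ∫⁻ ζ, g ζ ∂(κ ξ) ∂ν := le_lintegral_add _ _
        _ = ∫⁻ ξ, ∫⁻ ζ, (f + g) ζ ∂(κ ξ) ∂ν := by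
            refine lintegral_congr fun ξ => ?_
            rw [← lintegral_add_left f.measurable]
            simp [SimpleFunc.coe_add]
  rw [lintegral_eq_iSup_eapprox_lintegral hh]
  refine iSup_le fun m => ?_
  calc (SimpleFunc.eapprox h m).lintegral μ
      = ∫⁻ ζ, (SimpleFunc.eapprox h m) ζ ∂μ := ((SimpleFunc.eapprox h m).lintegral_eq_lintegral μ).symm
    _ ≤ ∫⁻ ξ, ∫⁻ ζ, (SimpleFunc.eapprox h m) ζ ∂(κ ξ) ∂ν := hsimple _
    _ ≤ ∫⁻ ξ, ∫⁻ ζ, h ζ ∂(κ ξ) ∂ν := by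
        refine lintegral_mono fun ξ => lintegral_mono fun ζ => ?_
        rw [← SimpleFunc.iSup_eapprox_apply hh ζ]
        exact le_iSup (fun k => (SimpleFunc.eapprox h k : X → ℝ≥0∞) ζ) m

lemma lintegral_CK (ν μ : Measure X) [IsFiniteMeasure ν] (κ : X → Measure X)
    (hCK : ∀ Γ : Set X, MeasurableSet Γ → μ Γ = ∫⁻ ξ, κ ξ Γ ∂ν)
    (hκ : ∀ᵐ ξ ∂ν, κ ξ Set.univ ≤ 1)
    (h : X → ℝ≥0∞) (hh : Measurable h) (M : ℝ≥0∞) (hM : M ≠ ⊤) (hhM : ∀ ζ, h ζ ≤ M) :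
    ∫⁻ ζ, h ζ ∂μ = ∫⁻ ξ, ∫⁻ ζ, h ζ ∂(κ ξ) ∂ν := by
  have hμν : μ Set.univ ≤ ν Set.univ := by
    rw [hCK _ MeasurableSet.univ]
    calc ∫⁻ ξ, κ ξ Set.univ ∂ν ≤ ∫⁻ _, 1 ∂ν := lintegral_mono_ae hκ
      _ = ν Set.univ := by simp
  have hμtop : μ Set.univ ≠ ⊤ := (hμν.trans_lt (measure_lt_top ν _)).ne
  have haM : M * μ Set.univ ≠ ⊤ := ENNReal.mul_ne_top hM hμtop
  refine le_antisymm (lintegral_CK_le ν μ κ hCK h hh) ?_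
  set B : X → ℝ≥0∞ := fun ξ => ∫⁻ ζ, h ζ ∂(κ ξ) with hBdef
  set A : X → ℝ≥0∞ := fun ξ => M * κ ξ Set.univ with hAdef
  have hBA : ∀ ξ, B ξ ≤ A ξ := fun ξ => by
    calc B ξ ≤ ∫⁻ _, M ∂(κ ξ) := lintegral_mono fun ζ => hhM ζ
      _ = M * κ ξ Set.univ := lintegral_const M
  have hhμ : ∫⁻ ζ, h ζ ∂μ ≤ M * μ Set.univ := by
    calc ∫⁻ ζ, h ζ ∂μ ≤ ∫⁻ _, M ∂μ := lintegral_mono fun ζ => hhM ζ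
      _ = M * μ Set.univ := lintegral_const M
  have h'le := lintegral_CK_le ν μ κ hCK (fun ζ => M - h ζ) (measurable_const.sub hh)
  have hL : ∫⁻ ζ, M - h ζ ∂μ = M * μ Set.univ - ∫⁻ ζ, h ζ ∂μ := by
    rw [lintegral_sub hh (hhμ.trans_lt haM.lt_top).ne (Filter.Eventually.of_forall hhM),
      lintegral_const]
  have hR : ∫⁻ ξ, ∫⁻ ζ, M - h ζ ∂(κ ξ) ∂ν = ∫⁻ ξ, A ξ - B ξ ∂ν := by
    refine lintegral_congr_ae (hκ.mono fun ξ hξ => ?_)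
    show ∫⁻ ζ, M - h ζ ∂(κ ξ) = A ξ - B ξ
    have hAfin : A ξ ≠ ⊤ := by
      have : A ξ ≤ M * 1 := mul_le_mul_right hξ M
      exact (this.trans_lt (ENNReal.mul_lt_top hM.lt_top ENNReal.one_lt_top)).ne
    rw [lintegral_sub hh ((hBA ξ).trans_lt hAfin.lt_top).ne (Filter.Eventually.of_forall hhM),
      lintegral_const]
  have hAint : ∫⁻ ξ, A ξ ∂ν = M * μ Set.univ := by
    rw [hAdef]
    rw [lintegral_const_mul' M _ hM, ← hCK _ MeasurableSet.univ]
  have hBle : ∫⁻ ξ, B ξ ∂ν ≤ M * μ Set.univ := by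
    rw [← hAint]; exact lintegral_mono hBA
  have hsuper : ∫⁻ ξ, A ξ - B ξ ∂ν + ∫⁻ ξ, B ξ ∂ν ≤ M * μ Set.univ := by
    calc ∫⁻ ξ, A ξ - B ξ ∂ν + ∫⁻ ξ, B ξ ∂ν ≤ ∫⁻ ξ, (A ξ - B ξ) + B ξ ∂ν := le_lintegral_add _ _
      _ = ∫⁻ ξ, A ξ ∂ν := lintegral_congr fun ξ => tsub_add_cancel_of_le (hBA ξ)
      _ = M * μ Set.univ := hAint
  have hkey : M * μ Set.univ - ∫⁻ ζ, h ζ ∂μ ≤ M * μ Set.univ - ∫⁻ ξ, B ξ ∂ν := by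
    calc M * μ Set.univ - ∫⁻ ζ, h ζ ∂μ = ∫⁻ ζ, M - h ζ ∂μ := hL.symm
      _ ≤ ∫⁻ ξ, ∫⁻ ζ, M - h ζ ∂(κ ξ) ∂ν := h'le
      _ = ∫⁻ ξ, A ξ - B ξ ∂ν := hR
      _ ≤ M * μ Set.univ - ∫⁻ ξ, B ξ ∂ν := ENNReal.le_sub_of_add_le_right (hBle.trans_lt haM.lt_top).ne hsuper
  calc ∫⁻ ξ, B ξ ∂ν = M * μ Set.univ - (M * μ Set.univ - ∫⁻ ξ, B ξ ∂ν) :=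
        (ENNReal.sub_sub_cancel haM hBle).symm
    _ ≤ M * μ Set.univ - (M * μ Set.univ - ∫⁻ ζ, h ζ ∂μ) := tsub_le_tsub_left hkey _
    _ = ∫⁻ ζ, h ζ ∂μ := ENNReal.sub_sub_cancel haM hhμ


lemma ennreal_balance {a b : ℝ≥0∞} (ha : a ≠ ⊤) (hb : b ≠ ⊤) {r : ℝ}
    (hr : r = a.toReal - b.toReal) :
    a + ENNReal.ofReal (-r) = b + ENNReal.ofReal r := by
  rcases le_total b a with hba | hab
  · have hr0 : 0 ≤ r := by
      rw [hr]
      exact sub_nonneg.mpr (ENNReal.toReal_le_toReal hb ha |>.mpr hba)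
    rw [ENNReal.ofReal_of_nonpos (by linarith), add_zero]
    calc a = ENNReal.ofReal a.toReal := (ENNReal.ofReal_toReal ha).symm
      _ = ENNReal.ofReal (b.toReal + r) := by rw [hr]; ring_nf
      _ = ENNReal.ofReal b.toReal + ENNReal.ofReal r :=
          ENNReal.ofReal_add ENNReal.toReal_nonneg hr0
      _ = b + ENNReal.ofReal r := by rw [ENNReal.ofReal_toReal hb]
  · have hr0 : r ≤ 0 := by
      rw [hr]
      exact sub_nonpos.mpr (ENNReal.toReal_le_toReal ha hb |>.mpr hab)
    rw [ENNReal.ofReal_of_nonpos hr0, add_zero]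
    calc a + ENNReal.ofReal (-r)
        = ENNReal.ofReal a.toReal + ENNReal.ofReal (-r) := by rw [ENNReal.ofReal_toReal ha]
      _ = ENNReal.ofReal (a.toReal + -r) :=
          (ENNReal.ofReal_add ENNReal.toReal_nonneg (by linarith)).symm
      _ = ENNReal.ofReal b.toReal := by rw [hr]; ring_nf
      _ = b := ENNReal.ofReal_toReal hb

lemma integrable_of_bound {μ : Measure X} [IsFiniteMeasure μ] {E : Type*}
    [NormedAddCommGroup E] {f : X → E} (hf : AEStronglyMeasurable f μ) (M : ℝ)
    (hfM : ∀ ζ, ‖f ζ‖ ≤ M) : Integrable f μ :=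
  ⟨hf, HasFiniteIntegral.of_bounded (C := M) (Filter.Eventually.of_forall hfM)⟩

lemma integral_CK_real (ν μ : Measure X) [IsFiniteMeasure ν] [IsFiniteMeasure μ]
    (κ : X → Measure X)
    (hCK : ∀ Γ : Set X, MeasurableSet Γ → μ Γ = ∫⁻ ξ, κ ξ Γ ∂ν)
    (hκ : ∀ᵐ ξ ∂ν, κ ξ Set.univ ≤ 1)
    (f : X → ℝ) (hf : Measurable f) (M : ℝ) (hfM : ∀ ζ, |f ζ| ≤ M)
    (g : X → ℝ) (hg : Measurable g) (M' : ℝ) (hgM : ∀ ξ, |g ξ| ≤ M')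
    (hFG : ∀ᵐ ξ ∂ν, ∫ ζ, f ζ ∂(κ ξ) = g ξ) :
    ∫ ζ, f ζ ∂μ = ∫ ξ, g ξ ∂ν := by
  have hnorm : ∀ ζ, ‖f ζ‖ ≤ M := fun ζ => by simpa [Real.norm_eq_abs] using hfM ζ
  have hint_f : Integrable f μ := integrable_of_bound hf.aestronglyMeasurable M hnorm
  have hint_g : Integrable g ν := integrable_of_bound hg.aestronglyMeasurable M'
    (fun ξ => by simpa [Real.norm_eq_abs] using hgM ξ)
  have hfle : ∀ ζ, ENNReal.ofReal (f ζ) ≤ ENNReal.ofReal M :=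
    fun ζ => ENNReal.ofReal_le_ofReal ((le_abs_self _).trans (hfM ζ))
  have hnfle : ∀ ζ, ENNReal.ofReal (-f ζ) ≤ ENNReal.ofReal M :=
    fun ζ => ENNReal.ofReal_le_ofReal ((neg_le_abs _).trans (hfM ζ))
  have hpos : ∫⁻ ζ, ENNReal.ofReal (f ζ) ∂μ
      = ∫⁻ ξ, ∫⁻ ζ, ENNReal.ofReal (f ζ) ∂(κ ξ) ∂ν :=
    lintegral_CK ν μ κ hCK hκ _ hf.ennreal_ofReal (ENNReal.ofReal M)
      ENNReal.ofReal_ne_top hfle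
  have hneg : ∫⁻ ζ, ENNReal.ofReal (-f ζ) ∂μ
      = ∫⁻ ξ, ∫⁻ ζ, ENNReal.ofReal (-f ζ) ∂(κ ξ) ∂ν :=
    lintegral_CK ν μ κ hCK hκ _ hf.neg.ennreal_ofReal (ENNReal.ofReal M)
      ENNReal.ofReal_ne_top hnfle
  set a : X → ℝ≥0∞ := fun ξ => ∫⁻ ζ, ENNReal.ofReal (f ζ) ∂(κ ξ) with hadef
  set b : X → ℝ≥0∞ := fun ξ => ∫⁻ ζ, ENNReal.ofReal (-f ζ) ∂(κ ξ) with hbdef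
  have key : ∀ᵐ ξ ∂ν, (a ξ + ENNReal.ofReal (-(g ξ)) = b ξ + ENNReal.ofReal (g ξ))
      ∧ a ξ ≤ ENNReal.ofReal M ∧ b ξ ≤ ENNReal.ofReal M := by
    filter_upwards [hκ, hFG] with ξ h1 h2
    haveI : IsFiniteMeasure (κ ξ) := ⟨lt_of_le_of_lt h1 ENNReal.one_lt_top⟩
    have hintκ : Integrable f (κ ξ) := integrable_of_bound hf.aestronglyMeasurable M hnorm
    have hbound : ∀ (w : X → ℝ≥0∞), (∀ ζ, w ζ ≤ ENNReal.ofReal M) →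
        ∫⁻ ζ, w ζ ∂(κ ξ) ≤ ENNReal.ofReal M := by
      intro w hw
      calc ∫⁻ ζ, w ζ ∂(κ ξ) ≤ ∫⁻ _, ENNReal.ofReal M ∂(κ ξ) := lintegral_mono hw
        _ = ENNReal.ofReal M * κ ξ Set.univ := lintegral_const _
        _ ≤ ENNReal.ofReal M * 1 := mul_le_mul_right h1 _
        _ = ENNReal.ofReal M := mul_one _
    have ha_le : a ξ ≤ ENNReal.ofReal M := hbound _ hfle
    have hb_le : b ξ ≤ ENNReal.ofReal M := hbound _ hnfle
    have ha_ne : a ξ ≠ ⊤ := (ha_le.trans_lt ENNReal.ofReal_lt_top).ne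
    have hb_ne : b ξ ≠ ⊤ := (hb_le.trans_lt ENNReal.ofReal_lt_top).ne
    refine ⟨?_, ha_le, hb_le⟩
    have hgξ : g ξ = (a ξ).toReal - (b ξ).toReal := by
      rw [← h2, integral_eq_lintegral_pos_part_sub_lintegral_neg_part hintκ]
    exact ennreal_balance ha_ne hb_ne hgξ
  have hsum : ∫⁻ ξ, a ξ ∂ν + ∫⁻ ξ, ENNReal.ofReal (-(g ξ)) ∂ν
      = ∫⁻ ξ, b ξ ∂ν + ∫⁻ ξ, ENNReal.ofReal (g ξ) ∂ν := by
    rw [← lintegral_add_right _ (by have hm : Measurable fun ξ => ENNReal.ofReal (-(g ξ)) := hg.neg.ennreal_ofReal; exact hm), ← lintegral_add_right _ hg.ennreal_ofReal]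
    exact lintegral_congr_ae (key.mono fun ξ h => h.1)
  have hfin : ∀ (w : X → ℝ≥0∞) (Mw : ℝ), (∀ᵐ ξ ∂ν, w ξ ≤ ENNReal.ofReal Mw) →
      ∫⁻ ξ, w ξ ∂ν ≠ ⊤ := by
    intro w Mw hw
    refine ((lintegral_mono_ae hw).trans_lt ?_).ne
    rw [lintegral_const]
    exact ENNReal.mul_lt_top ENNReal.ofReal_lt_top (measure_lt_top ν _)
  have hafin : ∫⁻ ξ, a ξ ∂ν ≠ ⊤ := hfin a M (key.mono fun ξ h => h.2.1)
  have hbfin : ∫⁻ ξ, b ξ ∂ν ≠ ⊤ := hfin b M (key.mono fun ξ h => h.2.2)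
  have hg1fin : ∫⁻ ξ, ENNReal.ofReal (g ξ) ∂ν ≠ ⊤ := hfin _ M' (Filter.Eventually.of_forall
    fun ξ => ENNReal.ofReal_le_ofReal ((le_abs_self _).trans (hgM ξ)))
  have hg2fin : ∫⁻ ξ, ENNReal.ofReal (-(g ξ)) ∂ν ≠ ⊤ := hfin _ M' (Filter.Eventually.of_forall
    fun ξ => ENNReal.ofReal_le_ofReal ((neg_le_abs _).trans (hgM ξ)))
  have htr := congrArg ENNReal.toReal hsum
  rw [ENNReal.toReal_add hafin hg2fin, ENNReal.toReal_add hbfin hg1fin] at htr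
  rw [integral_eq_lintegral_pos_part_sub_lintegral_neg_part hint_f,
    integral_eq_lintegral_pos_part_sub_lintegral_neg_part hint_g, hpos, hneg]
  linarith [htr]

lemma integral_CK_complex (ν μ : Measure X) [IsFiniteMeasure ν] [IsFiniteMeasure μ]
    (κ : X → Measure X)
    (hCK : ∀ Γ : Set X, MeasurableSet Γ → μ Γ = ∫⁻ ξ, κ ξ Γ ∂ν)
    (hκ : ∀ᵐ ξ ∂ν, κ ξ Set.univ ≤ 1)
    (f : X → ℂ) (hf : Measurable f) (M : ℝ) (hfM : ∀ ζ, ‖f ζ‖ ≤ M)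
    (G : X → ℂ) (hG : Measurable G) (M' : ℝ) (hGM : ∀ ξ, ‖G ξ‖ ≤ M')
    (hFG : ∀ᵐ ξ ∂ν, ∫ ζ, f ζ ∂(κ ξ) = G ξ) :
    ∫ ζ, f ζ ∂μ = ∫ ξ, G ξ ∂ν := by
  have hint_f : Integrable f μ := integrable_of_bound hf.aestronglyMeasurable M hfM
  have hint_G : Integrable G ν := integrable_of_bound hG.aestronglyMeasurable M' hGM
  have hre : ∫ ζ, (f ζ).re ∂μ = ∫ ξ, (G ξ).re ∂ν := by
    refine integral_CK_real ν μ κ hCK hκ _ (Complex.measurable_re.comp hf) M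
      (fun ζ => (Complex.abs_re_le_norm _).trans (hfM ζ)) _
      (Complex.measurable_re.comp hG) M'
      (fun ξ => (Complex.abs_re_le_norm _).trans (hGM ξ)) ?_
    filter_upwards [hκ, hFG] with ξ h1 h2
    haveI : IsFiniteMeasure (κ ξ) := ⟨lt_of_le_of_lt h1 ENNReal.one_lt_top⟩
    have hintκ : Integrable f (κ ξ) := integrable_of_bound hf.aestronglyMeasurable M hfM
    have := integral_re (μ := κ ξ) hintκ
    simp only [RCLike.re_to_complex] at this
    show ∫ ζ, (f ζ).re ∂(κ ξ) = (G ξ).re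
    rw [this, h2]
  have him : ∫ ζ, (f ζ).im ∂μ = ∫ ξ, (G ξ).im ∂ν := by
    refine integral_CK_real ν μ κ hCK hκ _ (Complex.measurable_im.comp hf) M
      (fun ζ => (Complex.abs_im_le_norm _).trans (hfM ζ)) _
      (Complex.measurable_im.comp hG) M'
      (fun ξ => (Complex.abs_im_le_norm _).trans (hGM ξ)) ?_
    filter_upwards [hκ, hFG] with ξ h1 h2
    haveI : IsFiniteMeasure (κ ξ) := ⟨lt_of_le_of_lt h1 ENNReal.one_lt_top⟩
    have hintκ : Integrable f (κ ξ) := integrable_of_bound hf.aestronglyMeasurable M hfM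
    have := integral_im (μ := κ ξ) hintκ
    simp only [RCLike.im_to_complex] at this
    show ∫ ζ, (f ζ).im ∂(κ ξ) = (G ξ).im
    rw [this, h2]
  have e1 := integral_re_add_im (𝕜 := ℂ) hint_f
  have e2 := integral_re_add_im (𝕜 := ℂ) hint_G
  simp only [RCLike.re_to_complex, RCLike.im_to_complex, RCLike.I_to_complex] at e1 e2
  rw [← e1, ← e2, hre, him]

end auxCK


lemma biPair_measurable {n : ℕ} (v : Fin n → ℂ) :
    Measurable fun x : Fin n → ℝ => biPair v x := by
  unfold biPair
  exact Finset.measurable_sum _ fun i _ =>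
    measurable_const.mul (Complex.measurable_ofReal.comp (measurable_pi_apply i))


/-- The semiflow property of the functions `Φ` and `ψ` of an affine family of sub-Markov
kernels: if `Φ(t+s,u) ≠ 0` then `Φ(t,u) ≠ 0`, `ψ(t,u) ∈ U`, `Φ(s,ψ(t,u)) ≠ 0`, and
`Φ(t+s,u) e^{⟨ψ(t+s,u),x⟩} = Φ(t,u) Φ(s,ψ(t,u)) e^{⟨ψ(s,ψ(t,u)),x⟩}` for `x ∈ D`. -/
theorem semiflow_of_affine {n : ℕ} (D : Set (Fin n → ℝ)) (hD : D.Nonempty)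
    (p : ℝ≥0 → (Fin n → ℝ) → Measure (Fin n → ℝ))
    (hp1 : ∀ (t : ℝ≥0), ∀ x ∈ D, p t x Set.univ ≤ 1)
    (hpD : ∀ (t : ℝ≥0), ∀ x ∈ D, p t x Dᶜ = 0)
    (hCK : ∀ (s t : ℝ≥0), ∀ x ∈ D, ∀ Γ : Set (Fin n → ℝ), MeasurableSet Γ →
      p (t + s) x Γ = ∫⁻ ξ, p t ξ Γ ∂(p s x))
    (Φ : ℝ≥0 → (Fin n → ℂ) → ℂ) (ψ : ℝ≥0 → (Fin n → ℂ) → (Fin n → ℂ))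
    (haff : ∀ (t : ℝ≥0), ∀ x ∈ D, ∀ u ∈ Uset D,
      ∫ ξ, Complex.exp (biPair u ξ) ∂(p t x) = Φ t u * Complex.exp (biPair (ψ t u) x))
    (u : Fin n → ℂ) (hu : u ∈ Uset D) (s t : ℝ≥0)
    (hΦ : Φ (t + s) u ≠ 0) :
    Φ t u ≠ 0 ∧ ψ t u ∈ Uset D ∧ Φ s (ψ t u) ≠ 0 ∧
      ∀ x ∈ D, Φ (t + s) u * Complex.exp (biPair (ψ (t + s) u) x) =
        Φ t u * Φ s (ψ t u) * Complex.exp (biPair (ψ s (ψ t u)) x) := by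
  obtain ⟨C, hC⟩ := id hu
  obtain ⟨x₀, hx₀⟩ := hD
  set eC := Real.exp C with heC
  have heCpos : 0 < eC := Real.exp_pos C
  -- finiteness instances
  have hfin : ∀ (r : ℝ≥0), ∀ x ∈ D, IsFiniteMeasure (p r x) :=
    fun r x hx => ⟨lt_of_le_of_lt (hp1 r x hx) ENNReal.one_lt_top⟩
  -- a.e. concentration on D
  have haeD : ∀ (r : ℝ≥0), ∀ x ∈ D, ∀ᵐ ζ ∂(p r x), ζ ∈ D := fun r x hx =>
    ae_iff.mpr (hpD r x hx)
  -- truncated integrand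
  set f' : (Fin n → ℝ) → ℂ :=
    fun ζ => if (biPair u ζ).re ≤ C then Complex.exp (biPair u ζ) else 0 with hf'def
  have hf'meas : Measurable f' :=
    Measurable.ite (measurableSet_le (Complex.measurable_re.comp (biPair_measurable u))
      measurable_const) (Complex.measurable_exp.comp (biPair_measurable u)) measurable_const
  have hf'bound : ∀ ζ, ‖f' ζ‖ ≤ eC := by
    intro ζ
    rw [hf'def]
    by_cases h : (biPair u ζ).re ≤ C
    · simp only [if_pos h]
      rw [Complex.norm_exp]
      exact Real.exp_le_exp.mpr h
    · simp only [if_neg h, norm_zero]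
      exact heCpos.le
  have hf'eq : ∀ ζ ∈ D, f' ζ = Complex.exp (biPair u ζ) := fun ζ hζ => if_pos (hC ζ hζ)
  have hswap : ∀ (r : ℝ≥0), ∀ x ∈ D,
      ∫ ζ, Complex.exp (biPair u ζ) ∂(p r x) = ∫ ζ, f' ζ ∂(p r x) := fun r x hx =>
    integral_congr_ae ((haeD r x hx).mono fun ζ hζ => (hf'eq ζ hζ).symm)
  -- the inner integral function and its truncation
  set g : (Fin n → ℝ) → ℂ := fun ξ => Φ t u * Complex.exp (biPair (ψ t u) ξ) with hgdef
  have hgmeas : Measurable g :=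
    measurable_const.mul (Complex.measurable_exp.comp (biPair_measurable (ψ t u)))
  set G : (Fin n → ℝ) → ℂ := fun ξ => if ‖g ξ‖ ≤ eC then g ξ else 0 with hGdef
  have hGmeas : Measurable G :=
    Measurable.ite (measurableSet_le hgmeas.norm measurable_const) hgmeas measurable_const
  have hGbound : ∀ ξ, ‖G ξ‖ ≤ eC := by
    intro ξ
    by_cases h : ‖g ξ‖ ≤ eC
    · have he : G ξ = g ξ := if_pos h
      rw [he]; exact h
    · have he : G ξ = 0 := if_neg h
      rw [he, norm_zero]; exact heCpos.le
  have hinner : ∀ ξ ∈ D, ∫ ζ, f' ζ ∂(p t ξ) = g ξ := fun ξ hξ => by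
    rw [← hswap t ξ hξ]; exact haff t ξ hξ u hu
  have hgbound : ∀ ξ ∈ D, ‖g ξ‖ ≤ eC := by
    intro ξ hξ
    rw [← hinner ξ hξ]
    haveI := hfin t ξ hξ
    calc ‖∫ ζ, f' ζ ∂(p t ξ)‖ ≤ eC * (p t ξ Set.univ).toReal :=
          norm_integral_le_of_norm_le_const (Filter.Eventually.of_forall hf'bound)
      _ ≤ eC := by
          have hle : (p t ξ Set.univ).toReal ≤ 1 := by
            have := ENNReal.toReal_mono (b := 1) (by simp) (hp1 t ξ hξ)
            simpa using this
          nlinarith [heCpos]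
  have hGeq : ∀ ξ ∈ D, G ξ = g ξ := fun ξ hξ => if_pos (hgbound ξ hξ)
  -- the Fubini identity
  have main : ∀ x ∈ D, Φ (t + s) u * Complex.exp (biPair (ψ (t + s) u) x)
      = ∫ ξ, G ξ ∂(p s x) := by
    intro x hx
    haveI := hfin s x hx
    haveI := hfin (t + s) x hx
    rw [← haff (t + s) x hx u hu, hswap (t + s) x hx]
    exact integral_CK_complex (p s x) (p (t + s) x) (p t)
      (fun Γ hΓ => hCK s t x hx Γ hΓ)
      ((haeD s x hx).mono fun ξ hξ => hp1 t ξ hξ)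
      f' hf'meas eC hf'bound G hGmeas eC hGbound
      ((haeD s x hx).mono fun ξ hξ => (hinner ξ hξ).trans (hGeq ξ hξ).symm)
  -- part 1
  have h1 : Φ t u ≠ 0 := by
    intro h0
    have hm := main x₀ hx₀
    have hz : G = fun _ => 0 := by
      funext ξ
      rw [hGdef]
      simp [hgdef, h0]
    rw [hz, integral_zero] at hm
    rcases mul_eq_zero.mp hm with h | h
    · exact hΦ h
    · exact Complex.exp_ne_zero _ h
  -- part 2
  have hΦpos : 0 < ‖Φ t u‖ := norm_pos_iff.mpr h1
  have h2 : ψ t u ∈ Uset D := by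
    refine ⟨Real.log (eC / ‖Φ t u‖), fun x hx => ?_⟩
    have hb := hgbound x hx
    rw [hgdef] at hb
    simp only [norm_mul, Complex.norm_exp] at hb
    have hexp : Real.exp ((biPair (ψ t u) x).re) ≤ eC / ‖Φ t u‖ := by
      rw [le_div_iff₀ hΦpos, mul_comm]
      exact hb
    calc (biPair (ψ t u) x).re = Real.log (Real.exp ((biPair (ψ t u) x).re)) :=
          (Real.log_exp _).symm
      _ ≤ Real.log (eC / ‖Φ t u‖) := Real.log_le_log (Real.exp_pos _) hexp
  -- part 4
  have h4 : ∀ x ∈ D, Φ (t + s) u * Complex.exp (biPair (ψ (t + s) u) x) =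
      Φ t u * Φ s (ψ t u) * Complex.exp (biPair (ψ s (ψ t u)) x) := by
    intro x hx
    have hm := main x hx
    have hGg : ∫ ξ, G ξ ∂(p s x) = ∫ ξ, g ξ ∂(p s x) :=
      integral_congr_ae ((haeD s x hx).mono fun ξ hξ => hGeq ξ hξ)
    rw [hGg, hgdef] at hm
    rw [integral_const_mul, haff s x hx (ψ t u) h2] at hm
    rw [hm]; ring
  -- part 3
  have h3 : Φ s (ψ t u) ≠ 0 := by
    intro h0
    have := h4 x₀ hx₀
    rw [h0, mul_zero, zero_mul] at this
    rcases mul_eq_zero.mp this with h | h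
    · exact hΦ h
    · exact Complex.exp_ne_zero _ h
  exact ⟨h1, h2, h3, h4⟩
end

section
/- Let D ⊆ ℝⁿ and define Re U := {v ∈ ℝⁿ : sup_{x∈D} ⟨v,x⟩ < ∞}, W := span_ℝ(Re U), and let Π_W denote the orthogonal projection of ℝⁿ onto W. Assume that the relative (intrinsic) interior of Re U is nonempty, let u be a point of the relative interior of Re U, and let (x_k)_{k∈ℕ} be a sequence with x_k ∈ D for all k such that ‖Π_W x_k‖ → ∞ as k → ∞. Then ⟨u, x_k⟩ → −∞ as k → ∞. -/
open Filter
open scoped Topology RealInnerProductSpace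

set_option maxHeartbeats 1000000

/-- The Lemma on explosion directions: if `Re U = {v : sup_{x∈D}⟨v,x⟩ < ∞}` has nonempty
relative (intrinsic) interior, `u` lies in this relative interior, and `(x_k)` is a sequence
in `D` whose orthogonal projection onto `W = span(Re U)` has norm tending to `∞`, then
`⟨u, x_k⟩ → −∞`. -/
theorem inner_tendsto_atBot_of_proj_norm_tendsto_atTop {n : ℕ}
    (D : Set (EuclideanSpace ℝ (Fin n)))
    (ReU : Set (EuclideanSpace ℝ (Fin n)))
    (hReU : ReU = {v : EuclideanSpace ℝ (Fin n) | ∃ C : ℝ, ∀ x ∈ D, ⟪v, x⟫ ≤ C})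
    (W : Submodule ℝ (EuclideanSpace ℝ (Fin n)))
    (hW : W = Submodule.span ℝ ReU)
    (u : EuclideanSpace ℝ (Fin n)) (hu : u ∈ intrinsicInterior ℝ ReU)
    (x : ℕ → EuclideanSpace ℝ (Fin n)) (hxD : ∀ k, x k ∈ D)
    (hproj : Tendsto (fun k => ‖(Submodule.orthogonalProjectionOnto W (x k) : EuclideanSpace ℝ (Fin n))‖)
      atTop atTop) :
    Tendsto (fun k => ⟪u, x k⟫) atTop atBot := by
  classical
  -- 0 ∈ ReU
  have h0 : (0 : EuclideanSpace ℝ (Fin n)) ∈ ReU := by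
    rw [hReU]; exact ⟨0, fun y _ => by simp⟩
  -- extract a ball around u inside ReU (within the affine span)
  have huReU : u ∈ ReU := intrinsicInterior_subset hu
  have huaff : u ∈ affineSpan ℝ ReU := subset_affineSpan ℝ ReU huReU
  obtain ⟨y, hy, hyu⟩ := hu
  rw [mem_interior_iff_mem_nhds, Metric.mem_nhds_iff] at hy
  obtain ⟨ε, hε, hball⟩ := hy
  -- W is contained in the direction of the affine span
  have hWdir : W ≤ (affineSpan ℝ ReU).direction := by
    rw [direction_affineSpan, hW]
    refine Submodule.span_le.2 fun v hv => ?_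
    have := vsub_mem_vectorSpan ℝ hv h0
    simpa using this
  -- key: small vectors of W can be added to u staying in ReU
  have hkey : ∀ w : EuclideanSpace ℝ (Fin n), w ∈ W → ‖w‖ < ε → u + w ∈ ReU := by
    intro w hwW hwε
    have hmem : u + w ∈ affineSpan ℝ ReU := by
      have := AffineSubspace.vadd_mem_of_mem_direction (hWdir hwW) huaff
      simpa [add_comm] using this
    have hz : (⟨u + w, hmem⟩ : affineSpan ℝ ReU) ∈ Metric.ball y ε := by
      rw [Metric.mem_ball, Subtype.dist_eq, hyu]
      simpa [dist_eq_norm] using hwε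
    exact hball hz
  -- the orthonormal basis of W
  set m := Module.finrank ℝ W with hm
  rcases Nat.eq_zero_or_pos m with hm0 | hmpos
  · -- W = ⊥, projection is 0, contradiction with hproj
    exfalso
    have hWbot : W = ⊥ := Submodule.finrank_eq_zero.1 hm0
    have hz : ∀ k, ‖((Submodule.orthogonalProjectionOnto W (x k)) : EuclideanSpace ℝ (Fin n))‖ = 0 := by
      intro k
      have : (Submodule.orthogonalProjectionOnto W (x k)) = 0 := by
        subst hWbot; simp
      simp [this]
    have h1 := hproj.eventually_ge_atTop 1
    obtain ⟨k, hk⟩ := h1.exists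
    rw [hz k] at hk; linarith
  haveI : Nonempty (Fin m) := ⟨⟨0, hmpos⟩⟩
  set b := stdOrthonormalBasis ℝ W with hb
  set δ := ε / 2 with hδ
  have hδpos : 0 < δ := by positivity
  -- points u ± δ • b i in ReU
  have hmemp : ∀ i : Fin m, u + δ • ((b i : EuclideanSpace ℝ (Fin n))) ∈ ReU := fun i =>
    hkey _ (Submodule.smul_mem _ _ (b i).2) (by
      rw [norm_smul]
      simp only [Real.norm_eq_abs, abs_of_pos hδpos]
      have h1 : ‖(b i : EuclideanSpace ℝ (Fin n))‖ = 1 := b.orthonormal.1 i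
      rw [h1, mul_one, hδ]; linarith)
  have hmemm : ∀ i : Fin m, u + (-δ) • ((b i : EuclideanSpace ℝ (Fin n))) ∈ ReU := fun i =>
    hkey _ (Submodule.smul_mem _ _ (b i).2) (by
      rw [norm_smul]
      simp only [Real.norm_eq_abs, abs_neg, abs_of_pos hδpos]
      have h1 : ‖(b i : EuclideanSpace ℝ (Fin n))‖ = 1 := b.orthonormal.1 i
      rw [h1, mul_one, hδ]; linarith)
  -- constants
  rw [hReU] at huReU
  simp only [hReU, Set.mem_setOf_eq] at hmemp hmemm
  obtain ⟨C0, hC0⟩ := huReU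
  choose Cp hCp using hmemp
  choose Cm hCm using hmemm
  set C : ℝ := max C0 (Finset.univ.sup' Finset.univ_nonempty fun i => max (Cp i) (Cm i)) with hC
  have hC0le : C0 ≤ C := le_max_left _ _
  have hsup : ∀ i, max (Cp i) (Cm i) ≤ C := fun i =>
    le_trans (Finset.le_sup' (fun i => max (Cp i) (Cm i)) (Finset.mem_univ i)) (le_max_right _ _)
  have hCple : ∀ i, Cp i ≤ C := fun i => le_trans (le_max_left _ _) (hsup i)
  have hCmle : ∀ i, Cm i ≤ C := fun i => le_trans (le_max_right _ _) (hsup i)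
  -- main pointwise bound
  have hbound : ∀ k, ⟪u, x k⟫
      ≤ C - (δ / m) * ‖((Submodule.orthogonalProjectionOnto W (x k)) : EuclideanSpace ℝ (Fin n))‖ := by
    intro k
    set A : ℝ := C - ⟪u, x k⟫ with hA
    have hA0 : 0 ≤ A := by
      have := hC0 (x k) (hxD k)
      simp only [hA]; linarith
    have habs : ∀ i : Fin m, |⟪(b i : EuclideanSpace ℝ (Fin n)), x k⟫| ≤ A / δ := by
      intro i
      have h1 : ⟪u + δ • (b i : EuclideanSpace ℝ (Fin n)), x k⟫ ≤ Cp i := hCp i (x k) (hxD k)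
      have h2 : ⟪u + (-δ) • (b i : EuclideanSpace ℝ (Fin n)), x k⟫ ≤ Cm i := hCm i (x k) (hxD k)
      rw [inner_add_left, real_inner_smul_left] at h1 h2
      have h1' : δ * ⟪(b i : EuclideanSpace ℝ (Fin n)), x k⟫ ≤ A := by
        have := hCple i; simp only [hA]; linarith
      have h2' : -(δ * ⟪(b i : EuclideanSpace ℝ (Fin n)), x k⟫) ≤ A := by
        have := hCmle i; simp only [hA]; linarith
      rw [le_div_iff₀ hδpos, ← abs_of_pos hδpos, ← abs_mul, abs_le]
      constructor <;> nlinarith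
    have hproj_sum : ((Submodule.orthogonalProjectionOnto W (x k)) : EuclideanSpace ℝ (Fin n))
        = ∑ i : Fin m, ⟪(b i : EuclideanSpace ℝ (Fin n)), x k⟫ • (b i : EuclideanSpace ℝ (Fin n)) := by
      rw [b.orthogonalProjectionOnto_apply_eq_sum (x k), Submodule.coe_sum]
      simp
      rfl
    have hnorm : ‖((Submodule.orthogonalProjectionOnto W (x k)) : EuclideanSpace ℝ (Fin n))‖ ≤ m * (A / δ) := by
      rw [hproj_sum]
      calc ‖∑ i : Fin m, ⟪(b i : EuclideanSpace ℝ (Fin n)), x k⟫ • (b i : EuclideanSpace ℝ (Fin n))‖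
          ≤ ∑ i : Fin m, ‖⟪(b i : EuclideanSpace ℝ (Fin n)), x k⟫ • (b i : EuclideanSpace ℝ (Fin n))‖ :=
            norm_sum_le _ _
        _ ≤ ∑ _i : Fin m, A / δ := by
            refine Finset.sum_le_sum fun i _ => ?_
            rw [norm_smul, Real.norm_eq_abs]
            have h1 : ‖(b i : EuclideanSpace ℝ (Fin n))‖ = 1 := b.orthonormal.1 i
            rw [h1, mul_one]
            exact habs i
        _ = m * (A / δ) := by simp [mul_comm]
    have hmR : (0 : ℝ) < m := by exact_mod_cast hmpos
    have hfin : (δ / m) * ‖((Submodule.orthogonalProjectionOnto W (x k)) : EuclideanSpace ℝ (Fin n))‖ ≤ A := by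
      calc (δ / m) * ‖((Submodule.orthogonalProjectionOnto W (x k)) : EuclideanSpace ℝ (Fin n))‖
          ≤ (δ / m) * (m * (A / δ)) := by
            apply mul_le_mul_of_nonneg_left hnorm (by positivity)
        _ = A := by field_simp
    simp only [hA] at hfin
    linarith
  -- conclude by comparison
  have hmR : (0 : ℝ) < m := by exact_mod_cast hmpos
  have hcoef : (0 : ℝ) < δ / m := by positivity
  have htend : Tendsto
      (fun k => C - (δ / m) * ‖((Submodule.orthogonalProjectionOnto W (x k)) : EuclideanSpace ℝ (Fin n))‖)
      atTop atBot := by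
    have h1 : Tendsto
        (fun k => (δ / m) * ‖((Submodule.orthogonalProjectionOnto W (x k)) : EuclideanSpace ℝ (Fin n))‖)
        atTop atTop := hproj.const_mul_atTop hcoef
    have h2 : Tendsto
        (fun k => -((δ / m) * ‖((Submodule.orthogonalProjectionOnto W (x k)) : EuclideanSpace ℝ (Fin n))‖))
        atTop atBot := tendsto_neg_atTop_atBot.comp h1
    have h3 := tendsto_atBot_add_const_left atTop C h2
    simpa [sub_eq_add_neg] using h3
  exact tendsto_atBot_mono hbound (by simpa [sub_eq_add_neg] using htend)
end

section
/- Let W be a linear subspace of ℝⁿ and let (x_k)_{k∈ℕ} be a sequence in ℝⁿ such that the orthogonal projections Π_W x_k converge in ℝⁿ as k → ∞ while limsup_{k→∞} ‖Π_{W^⊥} x_k‖ = ∞. Then there exist a subsequence (x_{k_j})_{j∈ℕ}, an integer r ≥ 1, and mutually orthogonal unit vectors g_1,…,g_r in the orthogonal complement W^⊥ such that: (a) the sequence x_{k_j} − ∑_{i=1}^{r} ⟨x_{k_j}, g_i⟩ g_i converges in ℝⁿ as j → ∞; (b) for every i, ⟨x_{k_j}, g_i⟩ → +∞ as j → ∞;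 and (c) the rates of divergence are non-increasing in i, in the sense that for every 1 ≤ i ≤ r−1 there is a constant C with ⟨x_{k_j}, g_{i+1}⟩ ≤ C·⟨x_{k_j}, g_i⟩ for all sufficiently large j. -/
open Filter
open scoped Topology RealInnerProductSpace

section Aux

variable {n : ℕ}

theorem orthogonalProjection_add_orthogonalProjection_orthogonal {E : Type*}
    [NormedAddCommGroup E] [InnerProductSpace ℝ E] (K : Submodule ℝ E)
    [K.HasOrthogonalProjection] (w : E) :
    (K.orthogonalProjectionOnto w : E) + (Kᗮ.orthogonalProjectionOnto w : E) = w :=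
  K.starProjection_add_starProjection_orthogonal w

theorem eq_orthogonalProjection_of_mem_orthogonal {E : Type*}
    [NormedAddCommGroup E] [InnerProductSpace ℝ E] {K : Submodule ℝ E}
    [K.HasOrthogonalProjection] {u v : E} (hv : v ∈ K)
    (hvo : u - v ∈ Kᗮ) : (K.orthogonalProjectionOnto u : E) = v :=
  Submodule.eq_starProjection_of_mem_orthogonal hv hvo

/-- The conclusion of the extraction lemma, as a predicate. -/
def DivConcl (n : ℕ) (W : Submodule ℝ (EuclideanSpace ℝ (Fin n)))
    (x : ℕ → EuclideanSpace ℝ (Fin n)) : Prop :=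
  ∃ (φ : ℕ → ℕ), StrictMono φ ∧
    ∃ (r : ℕ), 1 ≤ r ∧
      ∃ g : Fin r → EuclideanSpace ℝ (Fin n),
        (∀ i, g i ∈ Wᗮ) ∧
        (∀ i, ‖g i‖ = 1) ∧
        (∀ i j, i ≠ j → ⟪g i, g j⟫ = 0) ∧
        (∃ L : EuclideanSpace ℝ (Fin n),
          Tendsto (fun j => x (φ j) - ∑ i : Fin r, ⟪x (φ j), g i⟫ • g i) atTop (𝓝 L)) ∧
        (∀ i, Tendsto (fun j => ⟪x (φ j), g i⟫) atTop atTop) ∧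
        (∀ i i' : Fin r, (i' : ℕ) = (i : ℕ) + 1 →
          ∃ C : ℝ, ∀ᶠ j in atTop, ⟪x (φ j), g i'⟫ ≤ C * ⟪x (φ j), g i⟫)

/-- For `g ∈ Wᗮ`, the inner product with `z` only sees the `Wᗮ`-component of `z`. -/
lemma inner_eq_inner_proj (W : Submodule ℝ (EuclideanSpace ℝ (Fin n)))
    {g : EuclideanSpace ℝ (Fin n)} (z : EuclideanSpace ℝ (Fin n)) (hg : g ∈ Wᗮ) :
    ⟪z, g⟫ = ⟪(Submodule.orthogonalProjectionOnto Wᗮ z : EuclideanSpace ℝ (Fin n)), g⟫ := by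
  conv_lhs => rw [← orthogonalProjection_add_orthogonalProjection_orthogonal W z]
  rw [inner_add_left]
  have h0 : ⟪(Submodule.orthogonalProjectionOnto W z : EuclideanSpace ℝ (Fin n)), g⟫ = 0 :=
    (Submodule.mem_orthogonal W g).mp hg _ (Submodule.orthogonalProjectionOnto W z).2
  rw [h0, zero_add]

lemma div_aux (m : ℕ) : ∀ (W : Submodule ℝ (EuclideanSpace ℝ (Fin n)))
    (x : ℕ → EuclideanSpace ℝ (Fin n)),
    Module.finrank ℝ Wᗮ ≤ m →
    (∃ L : EuclideanSpace ℝ (Fin n),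
      Tendsto (fun k => (Submodule.orthogonalProjectionOnto W (x k) : EuclideanSpace ℝ (Fin n)))
        atTop (𝓝 L)) →
    atTop.limsup
      (fun k => (‖(Submodule.orthogonalProjectionOnto Wᗮ (x k) : EuclideanSpace ℝ (Fin n))‖ : EReal))
        = (⊤ : EReal) →
    DivConcl n W x := by
  induction m with
  | zero =>
    intro W x hrank hconv hlimsup
    exfalso
    have hbot : Wᗮ = ⊥ := Submodule.finrank_eq_zero.mp (Nat.le_zero.mp hrank)
    have hz : ∀ k, ‖(Submodule.orthogonalProjectionOnto Wᗮ (x k) : EuclideanSpace ℝ (Fin n))‖ = 0 := by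
      intro k
      have hmem : (Submodule.orthogonalProjectionOnto Wᗮ (x k) : EuclideanSpace ℝ (Fin n)) ∈ Wᗮ :=
        SetLike.coe_mem _
      rw [norm_eq_zero]
      exact (Submodule.eq_bot_iff _).mp hbot _ hmem
    simp only [hz, EReal.coe_zero, limsup_const] at hlimsup
    exact EReal.zero_ne_top hlimsup
  | succ m ih =>
    intro W x hrank hconv hlimsup
    -- Step 1: extract a subsequence along which the orthogonal part blows up at rate ≥ k.
    have hfreq : ∀ M : ℕ, ∃ᶠ k in atTop,
        (M : ℝ) ≤ ‖(Submodule.orthogonalProjectionOnto Wᗮ (x k) : EuclideanSpace ℝ (Fin n))‖ := by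
      intro M
      have hlt : ((M : ℝ) : EReal) < atTop.limsup
          (fun k => (‖(Submodule.orthogonalProjectionOnto Wᗮ (x k) : EuclideanSpace ℝ (Fin n))‖ : EReal)) := by
        rw [hlimsup]; exact EReal.coe_lt_top _
      have := frequently_lt_of_lt_limsup (by isBoundedDefault) hlt
      exact this.mono fun k hk => by exact_mod_cast hk.le
    obtain ⟨φ0, hφ0, hφ0M⟩ := extraction_forall_of_frequently hfreq
    set t : ℕ → ℝ :=
      fun k => ‖(Submodule.orthogonalProjectionOnto Wᗮ (x (φ0 k)) : EuclideanSpace ℝ (Fin n))‖ with ht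
    have htk : ∀ k : ℕ, (k : ℝ) ≤ t k := hφ0M
    have htt : Tendsto t atTop atTop := tendsto_atTop_mono htk tendsto_natCast_atTop_atTop
    -- Step 2: normalize and extract a convergent direction.
    set u : ℕ → EuclideanSpace ℝ (Fin n) :=
      fun k => (t k)⁻¹ • (Submodule.orthogonalProjectionOnto Wᗮ (x (φ0 k)) : EuclideanSpace ℝ (Fin n)) with hu
    have hunorm : ∀ k, ‖u k‖ = (t k)⁻¹ * t k := by
      intro k
      rw [hu]
      simp only [norm_smul, Real.norm_eq_abs, abs_inv, abs_of_nonneg (norm_nonneg _)]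
      rw [abs_of_nonneg (show 0 ≤ t k from norm_nonneg _)]
    have humem : ∀ k, u k ∈ Metric.closedBall (0 : EuclideanSpace ℝ (Fin n)) 1 ∩ Wᗮ := by
      intro k
      constructor
      · rw [Metric.mem_closedBall, dist_zero_right, hunorm]
        rcases eq_or_ne (t k) 0 with h | h
        · simp [h]
        · rw [inv_mul_cancel₀ h]
      · exact Submodule.smul_mem _ _ (Submodule.orthogonalProjectionOnto Wᗮ (x (φ0 k))).2
    have hcpt : IsCompact (Metric.closedBall (0 : EuclideanSpace ℝ (Fin n)) 1 ∩ Wᗮ) :=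
      (isCompact_closedBall _ _).inter_right (Submodule.closed_of_finiteDimensional Wᗮ)
    obtain ⟨g, hgmem, ψ, hψ, hguψ⟩ := hcpt.tendsto_subseq humem
    have hgW : g ∈ Wᗮ := hgmem.2
    have hupos : ∀ k, 1 ≤ k → ‖u k‖ = 1 := by
      intro k hk
      have h1 : (1 : ℝ) ≤ t k := le_trans (by exact_mod_cast hk) (htk k)
      rw [hunorm, inv_mul_cancel₀ (by linarith)]
    have hgnorm : ‖g‖ = 1 := by
      have h1 : Tendsto (fun j => ‖(u ∘ ψ) j‖) atTop (𝓝 ‖g‖) :=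
        (continuous_norm.tendsto g).comp hguψ
      have heq : (fun j => ‖(u ∘ ψ) j‖) =ᶠ[atTop] fun _ => (1 : ℝ) :=
        eventually_atTop.mpr ⟨1, fun j hj => hupos (ψ j) (le_trans hj (hψ.le_apply))⟩
      exact tendsto_nhds_unique (h1.congr' heq) tendsto_const_nhds
    have hg0 : g ≠ 0 := by
      intro h; rw [h, norm_zero] at hgnorm; norm_num at hgnorm
    set z : ℕ → EuclideanSpace ℝ (Fin n) := fun j => x (φ0 (ψ j)) with hz
    have hzproj : ∀ j, (Submodule.orthogonalProjectionOnto Wᗮ (z j) : EuclideanSpace ℝ (Fin n))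
        = t (ψ j) • u (ψ j) := by
      intro j
      rcases eq_or_ne (t (ψ j)) 0 with h | h
      · have : (Submodule.orthogonalProjectionOnto Wᗮ (z j) : EuclideanSpace ℝ (Fin n)) = 0 := by
          have := norm_eq_zero.mp h
          exact this
        rw [this, h, zero_smul]
      · rw [hu]
        rw [smul_smul, mul_inv_cancel₀ h, one_smul]
    have hinner_u : Tendsto (fun j => ⟪u (ψ j), g⟫) atTop (𝓝 1) := by
      have hc : Continuous fun v : EuclideanSpace ℝ (Fin n) => ⟪v, g⟫ :=
        continuous_id.inner continuous_const
      have := (hc.tendsto g).comp hguψ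
      have hgg : ⟪g, g⟫ = 1 := by
        rw [real_inner_self_eq_norm_sq, hgnorm]; norm_num
      rw [hgg] at this
      exact this
    have hzg : ∀ j, ⟪z j, g⟫ = t (ψ j) * ⟪u (ψ j), g⟫ := by
      intro j
      rw [inner_eq_inner_proj W (z j) hgW, hzproj j, real_inner_smul_left]
    have hev_half : ∀ᶠ j in atTop, (1 / 2 : ℝ) ≤ ⟪u (ψ j), g⟫ :=
      hinner_u.eventually (eventually_ge_nhds (by norm_num : (1 / 2 : ℝ) < 1))
    have htψ : Tendsto (fun j => t (ψ j)) atTop atTop := htt.comp hψ.tendsto_atTop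
    have hev_lower : ∀ᶠ j in atTop, t (ψ j) / 2 ≤ ⟪z j, g⟫ := by
      filter_upwards [hev_half, htψ.eventually_ge_atTop 0] with j h1 h2
      rw [hzg j]
      calc t (ψ j) / 2 = t (ψ j) * (1 / 2) := by ring
        _ ≤ t (ψ j) * ⟪u (ψ j), g⟫ := by
            exact mul_le_mul_of_nonneg_left h1 h2
    have hzg_tendsto : Tendsto (fun j => ⟪z j, g⟫) atTop atTop := by
      refine tendsto_atTop_mono' atTop hev_lower (htψ.atTop_div_const (by norm_num))
    -- the upper bound of inner products against unit vectors in Wᗮ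
    have hinner_le : ∀ (v : EuclideanSpace ℝ (Fin n)), v ∈ Wᗮ → ‖v‖ = 1 →
        ∀ j, ⟪z j, v⟫ ≤ t (ψ j) := by
      intro v hv hvn j
      rw [inner_eq_inner_proj W (z j) hv]
      calc ⟪(Submodule.orthogonalProjectionOnto Wᗮ (z j) : EuclideanSpace ℝ (Fin n)), v⟫
          ≤ ‖(Submodule.orthogonalProjectionOnto Wᗮ (z j) : EuclideanSpace ℝ (Fin n))‖ * ‖v‖ :=
            real_inner_le_norm _ _
        _ = t (ψ j) := by rw [hvn, mul_one]
    -- Step 3: the enlarged subspace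
    set W' := W ⊔ Submodule.span ℝ {g} with hW'
    have hWle : W ≤ W' := le_sup_left
    have hgW' : g ∈ W' := Submodule.mem_sup_right (Submodule.mem_span_singleton_self g)
    have hW'perp_le : W'ᗮ ≤ Wᗮ := Submodule.orthogonal_le hWle
    have hg_orth : ∀ v ∈ W'ᗮ, ⟪g, v⟫ = 0 := by
      intro v hv
      exact (Submodule.mem_orthogonal W' v).mp hv g hgW'
    -- rank computation
    have hrk2 : Module.finrank ℝ W'ᗮ ≤ m := by
      have hspan_le : Submodule.span ℝ {g} ≤ Wᗮ := by
        rw [Submodule.span_le, Set.singleton_subset_iff]; exact hgW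
      have hdisj : W ⊓ Submodule.span ℝ {g} = ⊥ :=
        disjoint_iff.mp ((Submodule.orthogonal_disjoint W).mono_right hspan_le)
      have hsum := Submodule.finrank_sup_add_finrank_inf_eq W (Submodule.span ℝ {g})
      rw [hdisj, finrank_bot, finrank_span_singleton hg0] at hsum
      have e1 := Submodule.finrank_add_finrank_orthogonal (𝕜 := ℝ) W
      have e2 := Submodule.finrank_add_finrank_orthogonal (𝕜 := ℝ) W'
      rw [hW'] at e2 ⊢
      omega
    -- the auxiliary sequence
    set y : ℕ → EuclideanSpace ℝ (Fin n) := fun j => z j - ⟪z j, g⟫ • g with hy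
    have hyproj : ∀ j, (Submodule.orthogonalProjectionOnto W' (y j) : EuclideanSpace ℝ (Fin n))
        = Submodule.orthogonalProjectionOnto W (z j) := by
      intro j
      apply eq_orthogonalProjection_of_mem_orthogonal
      · exact hWle (Submodule.orthogonalProjectionOnto W (z j)).2
      · have hsub : z j - (Submodule.orthogonalProjectionOnto W (z j) : EuclideanSpace ℝ (Fin n))
            = (Submodule.orthogonalProjectionOnto Wᗮ (z j) : EuclideanSpace ℝ (Fin n)) :=
          sub_eq_iff_eq_add'.mpr
            (orthogonalProjection_add_orthogonalProjection_orthogonal W (z j)).symm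
        have hrw : y j - (Submodule.orthogonalProjectionOnto W (z j) : EuclideanSpace ℝ (Fin n))
            = (Submodule.orthogonalProjectionOnto Wᗮ (z j) : EuclideanSpace ℝ (Fin n)) - ⟪z j, g⟫ • g := by
          rw [hy]
          simp only
          rw [sub_right_comm, hsub]
        rw [hrw]
        set v := (Submodule.orthogonalProjectionOnto Wᗮ (z j) : EuclideanSpace ℝ (Fin n)) - ⟪z j, g⟫ • g
          with hv
        have hvW : v ∈ Wᗮ :=
          Submodule.sub_mem _ (Submodule.orthogonalProjectionOnto Wᗮ (z j)).2 (Submodule.smul_mem _ _ hgW)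
        have hvg : ⟪g, v⟫ = 0 := by
          rw [hv, inner_sub_right, real_inner_smul_right]
          have h1 : ⟪g, (Submodule.orthogonalProjectionOnto Wᗮ (z j) : EuclideanSpace ℝ (Fin n))⟫
              = ⟪z j, g⟫ := by
            rw [real_inner_comm, ← inner_eq_inner_proj W (z j) hgW]
          have h2 : ⟪g, g⟫ = 1 := by
            rw [real_inner_self_eq_norm_sq, hgnorm]; norm_num
          rw [h1, h2, mul_one, sub_self]
        rw [Submodule.mem_orthogonal]
        intro w hw
        rcases Submodule.mem_sup.mp hw with ⟨a, ha, b, hb, rfl⟩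
        rcases Submodule.mem_span_singleton.mp hb with ⟨c, rfl⟩
        rw [inner_add_left, real_inner_smul_left]
        have haz : ⟪a, v⟫ = 0 := (Submodule.mem_orthogonal W v).mp hvW a ha
        rw [haz, hvg, zero_add, mul_zero]
    -- inner products with vectors of W'ᗮ are unchanged when passing from z to y
    have hinner_y : ∀ (v : EuclideanSpace ℝ (Fin n)), v ∈ W'ᗮ → ∀ j, ⟪y j, v⟫ = ⟪z j, v⟫ := by
      intro v hv j
      rw [hy]
      simp only
      rw [inner_sub_left, real_inner_smul_left, hg_orth v hv, mul_zero, sub_zero]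
    obtain ⟨L0, hL0⟩ := hconv
    have hL0z : Tendsto (fun j => (Submodule.orthogonalProjectionOnto W (z j) : EuclideanSpace ℝ (Fin n)))
        atTop (𝓝 L0) := hL0.comp ((hφ0.comp hψ).tendsto_atTop)
    by_cases hcase : atTop.limsup
        (fun j => (‖(Submodule.orthogonalProjectionOnto W'ᗮ (y j) : EuclideanSpace ℝ (Fin n))‖ : EReal))
        = (⊤ : EReal)
    · -- recursive case: apply the induction hypothesis to `y` and `W'`
      have hconv' : ∃ L, Tendsto
          (fun j => (Submodule.orthogonalProjectionOnto W' (y j) : EuclideanSpace ℝ (Fin n))) atTop (𝓝 L) :=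
        ⟨L0, by simpa only [hyproj] using hL0z⟩
      obtain ⟨φ1, hφ1, r, hr, gg, hggW', hggnorm, hggorth, ⟨L1, hL1⟩, hggdiv, hggrate⟩ :=
        ih W' y hrk2 hconv' hcase
      refine ⟨fun j => φ0 (ψ (φ1 j)), (hφ0.comp hψ).comp hφ1, r + 1, Nat.le_add_left 1 r,
        Fin.cons g gg, ?_, ?_, ?_, ?_, ?_, ?_⟩
      · intro i
        rcases Fin.eq_zero_or_eq_succ i with rfl | ⟨a, rfl⟩
        · simpa using hgW
        · simpa using hW'perp_le (hggW' a)
      · intro i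
        rcases Fin.eq_zero_or_eq_succ i with rfl | ⟨a, rfl⟩
        · simpa using hgnorm
        · simpa using hggnorm a
      · intro i jj hij
        rcases Fin.eq_zero_or_eq_succ i with rfl | ⟨a, rfl⟩ <;>
          rcases Fin.eq_zero_or_eq_succ jj with rfl | ⟨b, rfl⟩
        · exact absurd rfl hij
        · simp only [Fin.cons_zero, Fin.cons_succ]
          exact hg_orth (gg b) (hggW' b)
        · simp only [Fin.cons_zero, Fin.cons_succ]
          rw [real_inner_comm]
          exact hg_orth (gg a) (hggW' a)
        · simp only [Fin.cons_succ]
          exact hggorth a b (fun h => hij (congrArg Fin.succ h))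
      · refine ⟨L1, ?_⟩
        have hkey : ∀ j, x (φ0 (ψ (φ1 j))) -
            ∑ i : Fin (r + 1), ⟪x (φ0 (ψ (φ1 j))),
              (Fin.cons g gg : Fin (r + 1) → EuclideanSpace ℝ (Fin n)) i⟫ •
                (Fin.cons g gg : Fin (r + 1) → EuclideanSpace ℝ (Fin n)) i
            = y (φ1 j) - ∑ i : Fin r, ⟪y (φ1 j), gg i⟫ • gg i := by
          intro j
          have hsum : ∑ i : Fin (r + 1),
              ⟪z (φ1 j), (Fin.cons g gg : Fin (r + 1) → EuclideanSpace ℝ (Fin n)) i⟫ •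
                (Fin.cons g gg : Fin (r + 1) → EuclideanSpace ℝ (Fin n)) i
              = ⟪z (φ1 j), g⟫ • g + ∑ i : Fin r, ⟪z (φ1 j), gg i⟫ • gg i := by
            rw [Fin.sum_univ_succ]
            simp only [Fin.cons_zero, Fin.cons_succ]
          have hyi : ∀ i : Fin r, ⟪y (φ1 j), gg i⟫ = ⟪z (φ1 j), gg i⟫ :=
            fun i => hinner_y (gg i) (hggW' i) (φ1 j)
          show z (φ1 j) - _ = _
          rw [hsum]
          simp only [hyi]
          rw [hy]
          simp only
          abel
        have hfun : (fun j => x (φ0 (ψ (φ1 j))) -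
            ∑ i : Fin (r + 1), ⟪x (φ0 (ψ (φ1 j))),
              (Fin.cons g gg : Fin (r + 1) → EuclideanSpace ℝ (Fin n)) i⟫ •
                (Fin.cons g gg : Fin (r + 1) → EuclideanSpace ℝ (Fin n)) i)
            = fun j => y (φ1 j) - ∑ i : Fin r, ⟪y (φ1 j), gg i⟫ • gg i := funext hkey
        rw [hfun]
        exact hL1
      · intro i
        rcases Fin.eq_zero_or_eq_succ i with rfl | ⟨a, rfl⟩
        · simp only [Fin.cons_zero]
          exact hzg_tendsto.comp hφ1.tendsto_atTop
        · simp only [Fin.cons_succ]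
          exact Tendsto.congr (fun j => hinner_y (gg a) (hggW' a) (φ1 j)) (hggdiv a)
      · intro i i' hii'
        have hi'0 : i' ≠ 0 := by
          intro h
          rw [h] at hii'
          simp at hii'
        obtain ⟨b, rfl⟩ := Fin.eq_succ_of_ne_zero hi'0
        rcases Fin.eq_zero_or_eq_succ i with rfl | ⟨a, rfl⟩
        · refine ⟨2, ?_⟩
          have hub : ∀ j, ⟪z j, gg b⟫ ≤ t (ψ j) :=
            hinner_le (gg b) (hW'perp_le (hggW' b)) (hggnorm b)
          have hev2 : ∀ᶠ j in atTop,
              ⟪z j, (Fin.cons g gg : Fin (r + 1) → EuclideanSpace ℝ (Fin n)) b.succ⟫ ≤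
                2 * ⟪z j, (Fin.cons g gg : Fin (r + 1) → EuclideanSpace ℝ (Fin n)) 0⟫ := by
            filter_upwards [hev_lower] with j hj
            simp only [Fin.cons_succ, Fin.cons_zero]
            calc ⟪z j, gg b⟫ ≤ t (ψ j) := hub j
              _ ≤ 2 * ⟪z j, g⟫ := by linarith
          exact hφ1.tendsto_atTop.eventually hev2
        · have hab : (b : ℕ) = (a : ℕ) + 1 := by simpa using hii'
          obtain ⟨C, hC⟩ := hggrate a b hab
          refine ⟨C, hC.mono fun j hj => ?_⟩
          simp only [Fin.cons_succ]
          rw [← hinner_y (gg b) (hggW' b) (φ1 j), ← hinner_y (gg a) (hggW' a) (φ1 j)]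
          exact hj
    · -- bounded case: the orthogonal part of `y` is bounded, extract a convergent subsequence
      have hlt : atTop.limsup
          (fun j => (‖(Submodule.orthogonalProjectionOnto W'ᗮ (y j) : EuclideanSpace ℝ (Fin n))‖ : EReal))
          < (⊤ : EReal) := lt_top_iff_ne_top.mpr hcase
      obtain ⟨c, hc1, hc2⟩ := exists_between hlt
      have hev : ∀ᶠ j in atTop,
          (‖(Submodule.orthogonalProjectionOnto W'ᗮ (y j) : EuclideanSpace ℝ (Fin n))‖ : EReal) < c :=
        eventually_lt_of_limsup_lt hc1 (by isBoundedDefault)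
      have hcne : c ≠ ⊥ := by
        intro h
        rw [h] at hc1
        exact absurd hc1 (not_lt_bot)
      have hevM : ∀ᶠ j in atTop,
          ‖(Submodule.orthogonalProjectionOnto W'ᗮ (y j) : EuclideanSpace ℝ (Fin n))‖ ≤ c.toReal := by
        filter_upwards [hev] with j hj
        have h1 : (‖(Submodule.orthogonalProjectionOnto W'ᗮ (y j) : EuclideanSpace ℝ (Fin n))‖ : EReal)
            ≤ (c.toReal : EReal) := by
          rw [EReal.coe_toReal hc2.ne hcne]
          exact hj.le
        exact_mod_cast h1
      have hfreq2 : ∃ᶠ j in atTop,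
          (Submodule.orthogonalProjectionOnto W'ᗮ (y j) : EuclideanSpace ℝ (Fin n)) ∈
            Metric.closedBall (0 : EuclideanSpace ℝ (Fin n)) c.toReal ∩ W'ᗮ :=
        (hevM.mono fun j hj =>
          ⟨by rwa [Metric.mem_closedBall, dist_zero_right], SetLike.coe_mem _⟩).frequently
      have hcpt2 : IsCompact
          (Metric.closedBall (0 : EuclideanSpace ℝ (Fin n)) c.toReal ∩ W'ᗮ) :=
        (isCompact_closedBall _ _).inter_right (Submodule.closed_of_finiteDimensional _)
      obtain ⟨b, hbmem, φ1, hφ1, hbtend⟩ := hcpt2.tendsto_subseq' hfreq2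
      refine ⟨fun j => φ0 (ψ (φ1 j)), (hφ0.comp hψ).comp hφ1, 1, le_refl 1, fun _ => g,
        fun _ => hgW, fun _ => hgnorm, ?_, ⟨L0 + b, ?_⟩,
        fun _ => hzg_tendsto.comp hφ1.tendsto_atTop, ?_⟩
      · intro i j hij
        exact absurd (Subsingleton.elim i j) hij
      · have h1 : Tendsto (fun j =>
            (Submodule.orthogonalProjectionOnto W' (y (φ1 j)) : EuclideanSpace ℝ (Fin n))) atTop (𝓝 L0) := by
          simp only [hyproj]
          exact hL0z.comp hφ1.tendsto_atTop
        have htend : Tendsto (fun j => y (φ1 j)) atTop (𝓝 (L0 + b)) := by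
          refine (h1.add hbtend).congr fun j => ?_
          exact orthogonalProjection_add_orthogonalProjection_orthogonal W' (y (φ1 j))
        refine htend.congr fun j => ?_
        rw [hy]
        simp only
        rw [Fin.sum_univ_one]
      · intro i i' hii'
        exfalso
        have h1 := i.isLt
        have h2 := i'.isLt
        omega

end Aux

/-- Extraction of finitely many mutually orthogonal directions of divergence: if `Π_W x_k`
converges while `limsup ‖Π_{W^⊥} x_k‖ = ∞`, then along a subsequence there are `r ≥ 1`
mutually orthogonal unit vectors `g_1, …, g_r ∈ W^⊥` such that
`x_k − ∑ i ⟨x_k, g_i⟩ g_i` converges, each `⟨x_k, g_i⟩ → +∞`, and the divergence rates are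
non-increasing in `i`. -/
theorem divergence_directions_extraction {n : ℕ}
    (W : Submodule ℝ (EuclideanSpace ℝ (Fin n)))
    (x : ℕ → EuclideanSpace ℝ (Fin n))
    (hconv : ∃ L : EuclideanSpace ℝ (Fin n),
      Tendsto (fun k => (Submodule.orthogonalProjectionOnto W (x k) : EuclideanSpace ℝ (Fin n)))
        atTop (𝓝 L))
    (hlimsup : atTop.limsup
      (fun k => (‖(Submodule.orthogonalProjectionOnto Wᗮ (x k) : EuclideanSpace ℝ (Fin n))‖ : EReal))
        = (⊤ : EReal)) :
    ∃ (φ : ℕ → ℕ), StrictMono φ ∧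
      ∃ (r : ℕ), 1 ≤ r ∧
        ∃ g : Fin r → EuclideanSpace ℝ (Fin n),
          (∀ i, g i ∈ Wᗮ) ∧
          (∀ i, ‖g i‖ = 1) ∧
          (∀ i j, i ≠ j → ⟪g i, g j⟫ = 0) ∧
          (∃ L : EuclideanSpace ℝ (Fin n),
            Tendsto (fun j => x (φ j) - ∑ i : Fin r, ⟪x (φ j), g i⟫ • g i) atTop (𝓝 L)) ∧
          (∀ i, Tendsto (fun j => ⟪x (φ j), g i⟫) atTop atTop) ∧
          (∀ i i' : Fin r, (i' : ℕ) = (i : ℕ) + 1 →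
            ∃ C : ℝ, ∀ᶠ j in atTop, ⟪x (φ j), g i'⟫ ≤ C * ⟪x (φ j), g i⟫) := by
  exact div_aux (Module.finrank ℝ Wᗮ) W x le_rfl hconv hlimsup
end

section
/- Let D ⊆ ℝⁿ be a Borel set and U := {u ∈ ℂⁿ : sup_{x∈D} Re⟨u,x⟩ < ∞}. Let (Ω, 𝓕, ℙ) be a probability space with a filtration (𝓕_t)_{t≥0}, X : ℝ≥0 × Ω → ℝⁿ a jointly measurable, (𝓕_t)-adapted process with values in D, and (p_t)_{t≥0} Borel kernels on ℝⁿ such that for x ∈ D each p_t(x,·) has total mass at most 1 and is concentrated on D, and such that X is Markov with transition function (p_t): for all s,t ≥ 0 and every bounded Borel f : ℝⁿ → ℂ, 𝔼[f(X_{s+t}) | 𝓕_s] = ∫ f(ξ) p_t(X_s, dξ) ℙ-a.s. Let Φ : ℝ≥0 × ℂⁿ → ℂ and ψ : ℝ≥0 × ℂⁿ → ℂⁿ satisfy ∫ e^{⟨u,ξ⟩} p_t(x,dξ) = Φ(t,u)·e^{⟨ψ(t,u),x⟩} for all t ≥ 0, x ∈ D, u ∈ U. Let 0 ≤ t ≤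 t₁ ≤ t₂ and u₁, u₂ ∈ U, and suppose Φ(t₂−t₁, u₂) ≠ 0. Then ψ(t₂−t₁,u₂) ∈ U and u₁ + ψ(t₂−t₁,u₂) ∈ U, and ℙ-almost surely 𝔼[e^{⟨u₁, X_{t₁}⟩ + ⟨u₂, X_{t₂}⟩} | 𝓕_t] = Φ(t₂−t₁, u₂) · Φ(t₁−t, u₁ + ψ(t₂−t₁,u₂)) · e^{⟨ψ(t₁−t, u₁ + ψ(t₂−t₁,u₂)), X_t⟩}. -/
open MeasureTheory Complex Filter
open scoped NNReal

lemma biPair_add {n : ℕ} (u v : Fin n → ℂ) (x : Fin n → ℝ) :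
    biPair (u + v) x = biPair u x + biPair v x := by
  simp [biPair, add_mul, Finset.sum_add_distrib]

lemma continuous_expBiPair {n : ℕ} (u : Fin n → ℂ) :
    Continuous fun x : Fin n → ℝ => Complex.exp (biPair u x) :=
  Complex.continuous_exp.comp <| continuous_finset_sum _ fun i _ =>
    continuous_const.mul (Complex.continuous_ofReal.comp (continuous_apply i))

lemma norm_expBiPair {n : ℕ} (u : Fin n → ℂ) (x : Fin n → ℝ) :
    ‖Complex.exp (biPair u x)‖ = Real.exp (biPair u x).re := by
  rw [Complex.norm_exp]

/-- condexp commutes with the coercion `ℝ → ℂ`. -/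
lemma condexp_ofReal' {Ω : Type*} {m m0 : MeasurableSpace Ω} (hm : m ≤ m0) {μ : Measure Ω}
    [IsFiniteMeasure μ] {f : Ω → ℝ} (hf : Integrable f μ) :
    (μ[(fun ω => ((f ω : ℝ) : ℂ))|m]) =ᵐ[μ] fun ω => (((μ[f|m]) ω : ℝ) : ℂ) := by
  refine (ae_eq_condExp_of_forall_setIntegral_eq hm hf.ofReal
    (fun s _ _ => integrable_condExp.ofReal.integrableOn)
    (fun s hs _ => ?_)
    ((Complex.continuous_ofReal.comp_stronglyMeasurable
      stronglyMeasurable_condExp).aestronglyMeasurable)).symm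
  rw [integral_complex_ofReal, integral_complex_ofReal, setIntegral_condExp hm hf hs]

/-- Pull-out property of conditional expectation for bounded `m`-measurable complex factors. -/
lemma condexp_mul_bounded {Ω : Type*} {m m0 : MeasurableSpace Ω} (hm : m ≤ m0) {μ : Measure Ω}
    [IsFiniteMeasure μ] {f g : Ω → ℂ} (hf : StronglyMeasurable[m] f)
    (hg : Integrable g μ) (c : ℝ) (hf_bound : ∀ x, ‖f x‖ ≤ c) :
    (μ[fun ω => f ω * g ω|m]) =ᵐ[μ] fun ω => f ω * (μ[g|m]) ω := by
  set fr : Ω → ℝ := fun ω => (f ω).re with hfr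
  set fi : Ω → ℝ := fun ω => (f ω).im with hfi
  set gr : Ω → ℝ := fun ω => (g ω).re with hgr
  set gi : Ω → ℝ := fun ω => (g ω).im with hgi
  have hfrm : StronglyMeasurable[m] fr := Complex.continuous_re.comp_stronglyMeasurable hf
  have hfim : StronglyMeasurable[m] fi := Complex.continuous_im.comp_stronglyMeasurable hf
  have hgrI : Integrable gr μ := hg.re
  have hgiI : Integrable gi μ := hg.im
  have hfrb : ∀ᵐ x ∂μ, ‖fr x‖ ≤ c := ae_of_all _ fun x =>
    (Complex.abs_re_le_norm (f x)).trans (hf_bound x)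
  have hfib : ∀ᵐ x ∂μ, ‖fi x‖ ≤ c := ae_of_all _ fun x =>
    (Complex.abs_im_le_norm (f x)).trans (hf_bound x)
  have h1 := condExp_stronglyMeasurable_mul_of_bound hm hfrm hgrI c hfrb
  have h2 := condExp_stronglyMeasurable_mul_of_bound hm hfim hgiI c hfib
  have h3 := condExp_stronglyMeasurable_mul_of_bound hm hfrm hgiI c hfrb
  have h4 := condExp_stronglyMeasurable_mul_of_bound hm hfim hgrI c hfib
  have hI1 : Integrable (fr * gr) μ := hgrI.bdd_mul (hfrm.mono hm).aestronglyMeasurable hfrb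
  have hI2 : Integrable (fi * gi) μ := hgiI.bdd_mul (hfim.mono hm).aestronglyMeasurable hfib
  have hI3 : Integrable (fr * gi) μ := hgiI.bdd_mul (hfrm.mono hm).aestronglyMeasurable hfrb
  have hI4 : Integrable (fi * gr) μ := hgrI.bdd_mul (hfim.mono hm).aestronglyMeasurable hfib
  have hdecomp : (fun ω => f ω * g ω) =
      (fun ω => (((fr * gr - fi * gi) ω : ℝ) : ℂ)) +
        Complex.I • (fun ω => (((fr * gi + fi * gr) ω : ℝ) : ℂ)) := by
    funext ω
    simp only [Pi.add_apply, Pi.smul_apply, Pi.sub_apply, Pi.mul_apply, smul_eq_mul]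
    apply Complex.ext <;>
      simp [hfr, hfi, hgr, hgi, Complex.mul_re, Complex.mul_im] <;> ring
  have hgdecomp : g = (fun ω => ((gr ω : ℝ) : ℂ)) + Complex.I • (fun ω => ((gi ω : ℝ) : ℂ)) := by
    funext ω
    simp only [Pi.add_apply, Pi.smul_apply, smul_eq_mul]
    apply Complex.ext <;>
      simp [hgr, hgi, Complex.mul_re, Complex.mul_im]
  have hcr := condexp_ofReal' hm (hI1.sub hI2)
  have hci := condexp_ofReal' hm (hI3.add hI4)
  have hsub := condExp_sub (m := m) hI1 hI2
  have hadd := condExp_add (m := m) hI3 hI4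
  have eA : (μ[fun ω => (((fr * gr - fi * gi) ω : ℝ) : ℂ)|m]) =ᵐ[μ]
      fun ω => (((fr ω * (μ[gr|m]) ω - fi ω * (μ[gi|m]) ω : ℝ)) : ℂ) := by
    refine hcr.trans ?_
    filter_upwards [hsub, h1, h2] with ω a b c
    have : (μ[fr * gr - fi * gi|m]) ω = fr ω * (μ[gr|m]) ω - fi ω * (μ[gi|m]) ω := by
      rw [a, Pi.sub_apply, b, c, Pi.mul_apply, Pi.mul_apply]
    rw [this]
  have hsmultop := condExp_smul (m := m) (m₀ := m0) (μ := μ) Complex.I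
    (fun ω => (((fr * gi + fi * gr) ω : ℝ) : ℂ))
  have eB : (μ[Complex.I • fun ω => (((fr * gi + fi * gr) ω : ℝ) : ℂ)|m]) =ᵐ[μ]
      fun ω => Complex.I * (((fr ω * (μ[gi|m]) ω + fi ω * (μ[gr|m]) ω : ℝ)) : ℂ) := by
    refine hsmultop.trans ?_
    filter_upwards [hci, hadd, h3, h4] with ω a b c d
    have : (μ[fr * gi + fi * gr|m]) ω = fr ω * (μ[gi|m]) ω + fi ω * (μ[gr|m]) ω := by
      rw [b, Pi.add_apply, c, d, Pi.mul_apply, Pi.mul_apply]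
    rw [Pi.smul_apply, a, this, smul_eq_mul]
  have hgfull : (μ[g|m]) =ᵐ[μ]
      fun ω => (((μ[gr|m]) ω : ℝ) : ℂ) + Complex.I * (((μ[gi|m]) ω : ℝ) : ℂ) := by
    have hgcr := condexp_ofReal' hm hgrI
    have hgci := condexp_ofReal' hm hgiI
    have hgadd := condExp_add (m := m) (f := fun ω => ((gr ω : ℝ) : ℂ))
      (g := Complex.I • fun ω => ((gi ω : ℝ) : ℂ)) hgrI.ofReal
      ((hgiI.ofReal (𝕜 := ℂ)).smul Complex.I)
    have hgsmul := condExp_smul (m := m) (m₀ := m0) (μ := μ) Complex.I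
      (fun ω => ((gi ω : ℝ) : ℂ))
    rw [hgdecomp]
    refine hgadd.trans ?_
    filter_upwards [hgcr, hgci, hgsmul] with ω a b c
    rw [Pi.add_apply, a, c, Pi.smul_apply, b, smul_eq_mul]
  rw [hdecomp]
  have haddtop := condExp_add (m := m) (f := fun ω => (((fr * gr - fi * gi) ω : ℝ) : ℂ))
    (g := Complex.I • fun ω => (((fr * gi + fi * gr) ω : ℝ) : ℂ)) (hI1.sub hI2).ofReal
    (((hI3.add hI4).ofReal (𝕜 := ℂ)).smul Complex.I)
  refine haddtop.trans ?_
  filter_upwards [eA, eB, hgfull] with ω a b c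
  rw [Pi.add_apply, a, b, c]
  apply Complex.ext <;>
    simp [hfr, hfi, Complex.mul_re, Complex.mul_im] <;> ring

/-- Two-time conditional Fourier–Laplace transform of an affine Markov process: for
`t ≤ t₁ ≤ t₂`, `u₁, u₂ ∈ U` with `Φ(t₂−t₁,u₂) ≠ 0`, one has `ψ(t₂−t₁,u₂) ∈ U`,
`u₁ + ψ(t₂−t₁,u₂) ∈ U`, and
`𝔼[e^{⟨u₁,X_{t₁}⟩+⟨u₂,X_{t₂}⟩}|𝓕_t]
  = Φ(t₂−t₁,u₂) Φ(t₁−t, u₁+ψ(t₂−t₁,u₂)) e^{⟨ψ(t₁−t,u₁+ψ(t₂−t₁,u₂)),X_t⟩}` a.s. -/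
theorem affine_two_time_condexp {n : ℕ} {Ω : Type*} {mΩ : MeasurableSpace Ω}
    (P : Measure Ω) [IsProbabilityMeasure P]
    (𝓕 : Filtration ℝ≥0 mΩ)
    (D : Set (Fin n → ℝ)) (hD : MeasurableSet D)
    (X : ℝ≥0 → Ω → (Fin n → ℝ))
    (hXmeas : Measurable fun q : ℝ≥0 × Ω => X q.1 q.2)
    (hXadapted : Adapted 𝓕 X)
    (hXD : ∀ t ω, X t ω ∈ D)
    (p : ℝ≥0 → (Fin n → ℝ) → Measure (Fin n → ℝ))
    (hp1 : ∀ (t : ℝ≥0), ∀ x ∈ D, p t x Set.univ ≤ 1)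
    (hpD : ∀ (t : ℝ≥0), ∀ x ∈ D, p t x Dᶜ = 0)
    (hMarkov : ∀ (s t : ℝ≥0), ∀ f : (Fin n → ℝ) → ℂ, Measurable f →
      (∃ C : ℝ, ∀ y, ‖f y‖ ≤ C) →
      (P[fun ω => f (X (s + t) ω) | 𝓕 s]) =ᵐ[P] fun ω => ∫ ξ, f ξ ∂(p t (X s ω)))
    (Φ : ℝ≥0 → (Fin n → ℂ) → ℂ) (ψ : ℝ≥0 → (Fin n → ℂ) → (Fin n → ℂ))
    (haff : ∀ (t : ℝ≥0), ∀ x ∈ D, ∀ u ∈ Uset D,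
      ∫ ξ, Complex.exp (biPair u ξ) ∂(p t x) = Φ t u * Complex.exp (biPair (ψ t u) x))
    (t t₁ t₂ : ℝ≥0) (ht₁ : t ≤ t₁) (ht₂ : t₁ ≤ t₂)
    (u₁ : Fin n → ℂ) (hu₁ : u₁ ∈ Uset D)
    (u₂ : Fin n → ℂ) (hu₂ : u₂ ∈ Uset D)
    (hΦ : Φ (t₂ - t₁) u₂ ≠ 0) :
    ψ (t₂ - t₁) u₂ ∈ Uset D ∧ u₁ + ψ (t₂ - t₁) u₂ ∈ Uset D ∧
      (P[fun ω => Complex.exp (biPair u₁ (X t₁ ω) + biPair u₂ (X t₂ ω)) | 𝓕 t]) =ᵐ[P]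
        fun ω => Φ (t₂ - t₁) u₂ * Φ (t₁ - t) (u₁ + ψ (t₂ - t₁) u₂) *
          Complex.exp (biPair (ψ (t₁ - t) (u₁ + ψ (t₂ - t₁) u₂)) (X t ω)) := by
  -- finiteness of the transition measures on `D`
  have hfin : ∀ (s : ℝ≥0), ∀ x ∈ D, IsFiniteMeasure (p s x) := fun s x hx =>
    ⟨lt_of_le_of_lt (hp1 s x hx) ENNReal.one_lt_top⟩
  -- a.e. membership in `D`
  have haeD : ∀ (s : ℝ≥0), ∀ x ∈ D, ∀ᵐ ξ ∂(p s x), ξ ∈ D := by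
    intro s x hx
    rw [MeasureTheory.ae_iff]
    convert hpD s x hx using 2
    rfl
  -- integrability of the exponential against the transition measures
  have hint : ∀ (s : ℝ≥0), ∀ x ∈ D, ∀ u : Fin n → ℂ, ∀ C : ℝ,
      (∀ y ∈ D, (biPair u y).re ≤ C) →
      Integrable (fun ξ => Complex.exp (biPair u ξ)) (p s x) := by
    intro s x hx u C hC
    haveI := hfin s x hx
    refine ⟨(continuous_expBiPair u).aestronglyMeasurable, HasFiniteIntegral.of_bounded
      (C := Real.exp C) ?_⟩
    filter_upwards [haeD s x hx] with ξ hξ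
    rw [norm_expBiPair]
    exact Real.exp_le_exp.mpr (hC ξ hξ)
  -- value of the integral of the exponential
  have hval : ∀ (s : ℝ≥0), ∀ x ∈ D, ∀ u ∈ Uset D,
      ∫ ξ, D.indicator (fun ξ => Complex.exp (biPair u ξ)) ξ ∂(p s x)
        = Φ s u * Complex.exp (biPair (ψ s u) x) := by
    intro s x hx u hu
    obtain ⟨C, hC⟩ := hu
    have hI := hint s x hx u C hC
    rw [integral_indicator hD]
    have hcompl : ∫ ξ in Dᶜ, Complex.exp (biPair u ξ) ∂(p s x) = 0 := by
      rw [Measure.restrict_eq_zero.mpr (hpD s x hx)]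
      exact integral_zero_measure _
    have := integral_add_compl hD hI
    rw [hcompl, add_zero] at this
    rw [this, haff s x hx u ⟨C, hC⟩]
  -- norm bound on the integral
  have hnorm : ∀ (s : ℝ≥0), ∀ x ∈ D, ∀ u : Fin n → ℂ, ∀ C : ℝ,
      (∀ y ∈ D, (biPair u y).re ≤ C) →
      ‖∫ ξ, Complex.exp (biPair u ξ) ∂(p s x)‖ ≤ Real.exp C := by
    intro s x hx u C hC
    haveI := hfin s x hx
    have h := norm_integral_le_of_norm_le_const (μ := p s x)
      (f := fun ξ => Complex.exp (biPair u ξ)) (C := Real.exp C) (by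
        filter_upwards [haeD s x hx] with ξ hξ
        rw [norm_expBiPair]
        exact Real.exp_le_exp.mpr (hC ξ hξ))
    refine h.trans ?_
    have h1 := ENNReal.toReal_mono ENNReal.one_ne_top (hp1 s x hx)
    rw [ENNReal.toReal_one] at h1
    exact mul_le_of_le_one_right (Real.exp_pos C).le h1
  -- membership of ψ in U
  have hψmem : ∀ (s : ℝ≥0), ∀ u ∈ Uset D, Φ s u ≠ 0 → ψ s u ∈ Uset D := by
    intro s u hu hΦ'
    obtain ⟨C, hC⟩ := hu
    refine ⟨Real.log (Real.exp C / ‖Φ s u‖), fun x hx => ?_⟩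
    have h1 : ‖∫ ξ, Complex.exp (biPair u ξ) ∂(p s x)‖ ≤ Real.exp C := hnorm s x hx u C hC
    rw [haff s x hx u ⟨C, hC⟩, norm_mul, norm_expBiPair] at h1
    have habs : 0 < ‖Φ s u‖ := norm_pos_iff.mpr hΦ'
    have h2 : Real.exp ((biPair (ψ s u) x).re) ≤ Real.exp C / ‖Φ s u‖ := by
      rw [le_div_iff₀ habs]
      calc Real.exp ((biPair (ψ s u) x).re) * ‖Φ s u‖
          = ‖Φ s u‖ * Real.exp ((biPair (ψ s u) x).re) := by
            ring
        _ ≤ Real.exp C := h1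
    have h3 : 0 < Real.exp C / ‖Φ s u‖ :=
      div_pos (Real.exp_pos C) habs
    exact (Real.le_log_iff_exp_le h3).mpr h2
  have hv : ψ (t₂ - t₁) u₂ ∈ Uset D := hψmem (t₂ - t₁) u₂ hu₂ hΦ
  have hw : u₁ + ψ (t₂ - t₁) u₂ ∈ Uset D := by
    obtain ⟨C₁, hC₁⟩ := hu₁
    obtain ⟨C', hC'⟩ := hv
    refine ⟨C₁ + C', fun x hx => ?_⟩
    rw [biPair_add, Complex.add_re]
    exact add_le_add (hC₁ x hx) (hC' x hx)
  refine ⟨hv, hw, ?_⟩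
  -- the key one-step computation
  have key : ∀ (a b : ℝ≥0), a ≤ b → ∀ u ∈ Uset D,
      (P[fun ω => Complex.exp (biPair u (X b ω)) | 𝓕 a]) =ᵐ[P]
        fun ω => Φ (b - a) u * Complex.exp (biPair (ψ (b - a) u) (X a ω)) := by
    intro a b hab u hu
    obtain ⟨C, hC⟩ := hu
    set f : (Fin n → ℝ) → ℂ := D.indicator (fun ξ => Complex.exp (biPair u ξ)) with hf
    have hfm : Measurable f := (continuous_expBiPair u).measurable.indicator hD
    have hfb : ∀ y, ‖f y‖ ≤ Real.exp C := by
      intro y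
      by_cases hy : y ∈ D
      · rw [hf, Set.indicator_of_mem hy, norm_expBiPair]
        exact Real.exp_le_exp.mpr (hC y hy)
      · rw [hf, Set.indicator_of_notMem hy, norm_zero]
        exact (Real.exp_pos C).le
    have hM := hMarkov a (b - a) f hfm ⟨Real.exp C, hfb⟩
    rw [add_tsub_cancel_of_le hab] at hM
    have heq : (fun ω => f (X b ω)) = fun ω => Complex.exp (biPair u (X b ω)) :=
      funext fun ω => Set.indicator_of_mem (hXD b ω) _
    rw [heq] at hM
    refine hM.trans (Eventually.of_forall fun ω => ?_)
    exact hval (b - a) (X a ω) (hXD a ω) u ⟨C, hC⟩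
  -- notation
  set v := ψ (t₂ - t₁) u₂ with hvdef
  set w := u₁ + v with hwdef
  obtain ⟨C₁, hC₁⟩ := hu₁
  -- step A : conditional expectation at time t₁ of the second factor
  have hA := key t₁ t₂ ht₂ u₂ hu₂
  -- the first factor
  have hg₁sm : StronglyMeasurable[𝓕 t₁] fun ω => Complex.exp (biPair u₁ (X t₁ ω)) :=
    (continuous_expBiPair u₁).comp_stronglyMeasurable (hXadapted t₁).stronglyMeasurable
  have hg₁b : ∀ ω, ‖Complex.exp (biPair u₁ (X t₁ ω))‖ ≤ Real.exp C₁ := fun ω => by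
    rw [norm_expBiPair]
    exact Real.exp_le_exp.mpr (hC₁ _ (hXD t₁ ω))
  obtain ⟨C₂, hC₂⟩ := hu₂
  have hg₂int : Integrable (fun ω => Complex.exp (biPair u₂ (X t₂ ω))) P := by
    refine ⟨((continuous_expBiPair u₂).comp_stronglyMeasurable
      ((hXadapted t₂).stronglyMeasurable.mono (𝓕.le t₂))).aestronglyMeasurable,
      HasFiniteIntegral.of_bounded (C := Real.exp C₂) (ae_of_all _ fun ω => ?_)⟩
    rw [norm_expBiPair]
    exact Real.exp_le_exp.mpr (hC₂ _ (hXD t₂ ω))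
  -- step B : pull-out at time t₁
  have hB := condexp_mul_bounded (𝓕.le t₁) hg₁sm hg₂int (Real.exp C₁) hg₁b
  -- combine with step A
  have hC : (P[fun ω => Complex.exp (biPair u₁ (X t₁ ω)) *
        Complex.exp (biPair u₂ (X t₂ ω))|𝓕 t₁]) =ᵐ[P]
      fun ω => Φ (t₂ - t₁) u₂ * Complex.exp (biPair w (X t₁ ω)) := by
    refine hB.trans ?_
    filter_upwards [hA] with ω hω
    rw [hω, hwdef, biPair_add, Complex.exp_add]
    ring
  -- tower property
  have htower : (P[fun ω => Complex.exp (biPair u₁ (X t₁ ω)) *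
        Complex.exp (biPair u₂ (X t₂ ω))|𝓕 t]) =ᵐ[P]
      (P[P[fun ω => Complex.exp (biPair u₁ (X t₁ ω)) *
        Complex.exp (biPair u₂ (X t₂ ω))|𝓕 t₁]|𝓕 t]) :=
    (condExp_condExp_of_le (𝓕.mono ht₁) (𝓕.le t₁)).symm
  have hD2 : (P[P[fun ω => Complex.exp (biPair u₁ (X t₁ ω)) *
        Complex.exp (biPair u₂ (X t₂ ω))|𝓕 t₁]|𝓕 t]) =ᵐ[P]
      (P[fun ω => Φ (t₂ - t₁) u₂ * Complex.exp (biPair w (X t₁ ω))|𝓕 t]) :=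
    condExp_congr_ae hC
  have hsmul : (P[fun ω => Φ (t₂ - t₁) u₂ * Complex.exp (biPair w (X t₁ ω))|𝓕 t]) =ᵐ[P]
      fun ω => Φ (t₂ - t₁) u₂ * (P[fun ω => Complex.exp (biPair w (X t₁ ω))|𝓕 t]) ω := by
    have h := condExp_smul (m := 𝓕 t) (m₀ := mΩ) (μ := P) (Φ (t₂ - t₁) u₂)
      (fun ω => Complex.exp (biPair w (X t₁ ω)))
    have e1 : (Φ (t₂ - t₁) u₂ • fun ω => Complex.exp (biPair w (X t₁ ω)))
        = fun ω => Φ (t₂ - t₁) u₂ * Complex.exp (biPair w (X t₁ ω)) := rfl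
    rw [e1] at h
    refine h.trans (Eventually.of_forall fun ω => ?_)
    simp [smul_eq_mul]
  have hKey2 := key t t₁ ht₁ w hw
  -- final assembly
  have hexp : (fun ω => Complex.exp (biPair u₁ (X t₁ ω) + biPair u₂ (X t₂ ω)))
      = fun ω => Complex.exp (biPair u₁ (X t₁ ω)) * Complex.exp (biPair u₂ (X t₂ ω)) :=
    funext fun ω => Complex.exp_add _ _
  rw [hexp]
  refine ((htower.trans hD2).trans hsmul).trans ?_
  filter_upwards [hKey2] with ω hω
  rw [hω]
  ring
end
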